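/- arXiv:1905.05418 — 2 statements merged into one kernel-verified Lean document; each statement's English description precedes it below -/
import Mathlib

section
/- Suppose G_1 and G_2 are 2-connected finite simple graphs each satisfying the equalities (♠)_2 (namely |E(G_i)| = 2(|V(G_i)|−1) and |E(S)| = 2|S|−3 for every good flat S of G_i), with chosen edges e_1 of G_1 and e_2 of G_2. Then the collision of G_1 and G_2 on e_1 and e_2, i.e. the graph obtained from the disjoint union of G_1 and G_2 by identifying e_1 with e_2 (together with their endpoints) and then deleting the identified edge, also satisfies the equalities (♠)_2. -/
open SimpleGraph
open scoped Pointwise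

namespace Gor

/-! ### Graph-theoretic notions -/

/-- A graph is `2`-connected if it is connected and remains connected after deletion of any
single vertex.  A single edge `K₂` counts as `2`-connected. -/
def IsTwoConnected {V : Type*} (G : SimpleGraph V) : Prop :=
  G.Connected ∧ ∀ v : V, (G.induce {u : V | u ≠ v}).Connected

/-- `E(S)`: the set of edges of `G` with both endpoints in `S`. -/
def edgesIn {V : Type*} (G : SimpleGraph V) (S : Set V) : Set (Sym2 V) :=
  {e ∈ G.edgeSet | ∀ v ∈ e, v ∈ S}

/-- The simple graph obtained from `G` by contracting all edges in `F`: its vertices are the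
connected components of the graph with edge set `F`, two being adjacent if some edge of `G`
joins them. -/
def contractEdges {V : Type*} (G : SimpleGraph V) (F : Set (Sym2 V)) :
    SimpleGraph (SimpleGraph.fromEdgeSet F).ConnectedComponent :=
  SimpleGraph.fromRel fun c d => ∃ u v : V, G.Adj u v ∧
    (SimpleGraph.fromEdgeSet F).connectedComponentMk u = c ∧
    (SimpleGraph.fromEdgeSet F).connectedComponentMk v = d

/-- `S` is a good flat of `G`: the induced subgraph `G[S]` is `2`-connected and the contraction
of all edges of `E(S)` in `G` is `2`-connected. -/
def IsGoodFlat {V : Type*} (G : SimpleGraph V) (S : Set V) : Prop :=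
  IsTwoConnected (G.induce S) ∧ IsTwoConnected (contractEdges G (edgesIn G S))

/-- The weight function `w : E → {1, δ-1}` with `w e = 1` whenever `G∖e` is `2`-connected and
`w e = δ - 1` whenever `G/e` is `2`-connected. -/
def IsCanonicalWeight {V : Type*} (G : SimpleGraph V) (δ : ℕ) (w : Sym2 V → ℕ) : Prop :=
  (∀ e ∈ G.edgeSet, w e = 1 ∨ w e = δ - 1) ∧
  (∀ e ∈ G.edgeSet, IsTwoConnected (G.deleteEdges {e}) → w e = 1) ∧
  (∀ e ∈ G.edgeSet, IsTwoConnected (contractEdges G {e}) → w e = δ - 1)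

/-- A `2`-connected graph `G` satisfies `(♠)_δ` via the weight function `w`. -/
def SatisfiesSpade {V : Type*} (G : SimpleGraph V) (δ : ℕ) (w : Sym2 V → ℕ) : Prop :=
  IsTwoConnected G ∧ IsCanonicalWeight G δ w ∧
  (∑ᶠ e ∈ G.edgeSet, w e) = δ * (Nat.card V - 1) ∧
  ∀ S : Set V, IsGoodFlat G S → (∑ᶠ e ∈ edgesIn G S, w e) + 1 = δ * (S.ncard - 1)

/-- The number of `2`-connected components (blocks) of a graph: the number of inclusion-maximal
vertex subsets inducing a `2`-connected subgraph. -/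
noncomputable def numBlocks {V : Type*} (G : SimpleGraph V) : ℕ :=
  {S : Set V | IsTwoConnected (G.induce S) ∧
    ∀ T : Set V, S ⊆ T → IsTwoConnected (G.induce T) → S = T}.ncard

/-! ### Lattice polytopes and the Gorenstein property -/

/-- A point of `ℝ^η` is a lattice point if all its coordinates are integers. -/
def IsLatticePoint {η : Type*} (x : η → ℝ) : Prop := ∀ i, ∃ z : ℤ, x i = z

/-- The cone over a polytope `P ⊆ ℝ^η`, living in `ℝ^η × ℝ`. -/
def coneOver {η : Type*} (P : Set (η → ℝ)) : Set ((η → ℝ) × ℝ) :=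
  {y | ∃ t : ℝ, ∃ p ∈ P, 0 ≤ t ∧ y = (t • p, t)}

/-- The lattice affinely spanned by the lattice points of `P`, placed at height one;
i.e. the subgroup of `ℝ^η × ℝ` generated by `{(p, 1) : p a lattice point of P}`. -/
def coneLattice {η : Type*} (P : Set (η → ℝ)) : Submodule ℤ ((η → ℝ) × ℝ) :=
  Submodule.span ℤ {y | ∃ p ∈ P, IsLatticePoint p ∧ y = (p, 1)}

/-- `h` is a linear form cutting out a facet-supporting hyperplane of the cone over `P`:
it is nonnegative on the cone and vanishes on a subset of the cone spanning one dimension less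
than the cone itself. -/
def IsFacetForm {η : Type*} (P : Set (η → ℝ)) (h : ((η → ℝ) × ℝ) →ₗ[ℝ] ℝ) : Prop :=
  (∀ y ∈ coneOver P, 0 ≤ h y) ∧
  Module.finrank ℝ (Submodule.span ℝ {y ∈ coneOver P | h y = 0}) + 1 =
    Module.finrank ℝ (Submodule.span ℝ (coneOver P))

/-- `h` is reduced with respect to the lattice spanned by `P`: it takes integer values on the
lattice and attains the value `1` there. -/
def IsReducedForm {η : Type*} (P : Set (η → ℝ)) (h : ((η → ℝ) × ℝ) →ₗ[ℝ] ℝ) : Prop :=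
  (∀ y ∈ coneLattice P, ∃ z : ℤ, h y = z) ∧ ∃ y ∈ coneLattice P, h y = 1

/-- A polytope `P`, regarded as full-dimensional in the affine lattice it spans, is
`δ`-Gorenstein if there is a lattice point `v ∈ δP` with `h (v, δ) = 1` for the reduced
equation `h` of every facet-supporting hyperplane of the cone over `P`. -/
def IsDeltaGorenstein {η : Type*} (P : Set (η → ℝ)) (δ : ℕ) : Prop :=
  ∃ v : η → ℝ, v ∈ (δ : ℝ) • P ∧ (v, (δ : ℝ)) ∈ coneLattice P ∧
    ∀ h : ((η → ℝ) × ℝ) →ₗ[ℝ] ℝ, IsFacetForm P h → IsReducedForm P h → h (v, (δ : ℝ)) = 1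

/-- A polytope is Gorenstein if it is `δ`-Gorenstein for some positive integer `δ`. -/
def IsGorenstein {η : Type*} (P : Set (η → ℝ)) : Prop :=
  ∃ δ : ℕ, 0 < δ ∧ IsDeltaGorenstein P δ

/-! ### Graphic matroids of simple graphs and their polytopes -/

/-- An independent set of the graphic matroid of `G`: a set of edges forming a forest. -/
def IsGraphicIndep {V : Type*} (G : SimpleGraph V) (I : Set (Sym2 V)) : Prop :=
  I ⊆ G.edgeSet ∧ (SimpleGraph.fromEdgeSet I).IsAcyclic

/-- A basis of the graphic matroid of `G`: a maximal forest (spanning forest). -/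
def IsGraphicBasis {V : Type*} (G : SimpleGraph V) (B : Set (Sym2 V)) : Prop :=
  IsGraphicIndep G B ∧ ∀ e ∈ G.edgeSet, e ∉ B → ¬ IsGraphicIndep G (insert e B)

/-- The base polytope `B(M(G))` of the graphic matroid of `G`: the convex hull of the
indicator vectors of the bases. -/
def basePolytope {V : Type*} (G : SimpleGraph V) : Set (Sym2 V → ℝ) :=
  convexHull ℝ {x | ∃ B : Set (Sym2 V), IsGraphicBasis G B ∧
    x = B.indicator fun _ => (1 : ℝ)}

/-- The base polytope `B(M(G))`, regarded inside `ℝ^E` where `E` is the edge set of `G`. -/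
def basePolytopeE {V : Type*} (G : SimpleGraph V) : Set (↥G.edgeSet → ℝ) :=
  convexHull ℝ {x | ∃ B : Set (Sym2 V), IsGraphicBasis G B ∧
    x = (Subtype.val ⁻¹' B).indicator fun _ => (1 : ℝ)}

/-- A homogeneous inequality `g x ≥ 0` is valid for `P` and defines a facet (a supporting
hyperplane whose intersection with `P` has affine dimension one less than `P`). -/
def IsSupportingFaceIneq {α : Type*} (P : Set (α → ℝ)) (g : (α → ℝ) → ℝ) : Prop :=
  (∀ x ∈ P, 0 ≤ g x) ∧
  Module.finrank ℝ (vectorSpan ℝ {x ∈ P | g x = 0}) + 1 =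
    Module.finrank ℝ (vectorSpan ℝ P)

/-! ### Multigraphs -/

/-- A finite undirected loopless multigraph on a vertex type `V` with edge type `E`. -/
structure Multigraph (V E : Type*) where
  ends : E → Sym2 V
  loopless : ∀ e, ¬ (ends e).IsDiag

/-- The underlying simple graph of a multigraph. -/
def Multigraph.toSimple {V E : Type*} (G : Multigraph V E) : SimpleGraph V :=
  SimpleGraph.fromEdgeSet (Set.range G.ends)

/-- `E(S)` for a multigraph: the set of edges with both endpoints in `S`. -/
def Multigraph.edgesIn {V E : Type*} (G : Multigraph V E) (S : Set V) : Set E :=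
  {e | ∀ v ∈ G.ends e, v ∈ S}

/-- A set of edges of a multigraph is a forest (an independent set of the graphic matroid):
no two parallel edges and no cycle. -/
def IsMultiForest {V E : Type*} (G : Multigraph V E) (I : Set E) : Prop :=
  Set.InjOn G.ends I ∧ (SimpleGraph.fromEdgeSet (G.ends '' I)).IsAcyclic

/-- The independence polytope `P(M(G))` of the graphic matroid of a multigraph `G`. -/
def multiIndepPolytope {V E : Type*} (G : Multigraph V E) : Set (E → ℝ) :=
  convexHull ℝ {x | ∃ I : Set E, IsMultiForest G I ∧ x = I.indicator fun _ => (1 : ℝ)}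

/-- The rank of a set of edges in the graphic matroid of a multigraph. -/
noncomputable def mrank {V E : Type*} (G : Multigraph V E) (A : Set E) : ℕ :=
  sSup {n | ∃ I ⊆ A, IsMultiForest G I ∧ I.ncard = n}

/-- A flat of the graphic matroid of a multigraph: adding any further edge increases the rank. -/
def IsGraphicFlat {V E : Type*} (G : Multigraph V E) (A : Set E) : Prop :=
  ∀ e : E, e ∉ A → mrank G (insert e A) ≠ mrank G A

/-- A circuit of the graphic matroid of a multigraph: a minimal dependent set of edges. -/
def IsMultiCircuit {V E : Type*} (G : Multigraph V E) (C : Set E) : Prop :=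
  ¬ IsMultiForest G C ∧ ∀ C' ⊂ C, IsMultiForest G C'

/-- The restriction of the graphic matroid of `G` to `A` is a connected matroid:
`A` is nonempty and any two distinct elements of `A` lie on a common circuit inside `A`. -/
def ConnectedRestriction {V E : Type*} (G : Multigraph V E) (A : Set E) : Prop :=
  A.Nonempty ∧ ∀ e ∈ A, ∀ f ∈ A, e ≠ f → ∃ C ⊆ A, IsMultiCircuit G C ∧ e ∈ C ∧ f ∈ C

/-- `G` is the `m`-blow-up of the simple graph `H`: every edge of `H` is replaced by exactly
`m` parallel edges and there are no other edges. -/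
def IsBlowUp {V E : Type*} (G : Multigraph V E) (m : ℕ) (H : SimpleGraph V) : Prop :=
  (∀ p ∈ H.edgeSet, {e : E | G.ends e = p}.ncard = m) ∧
  ∀ p : Sym2 V, p ∉ H.edgeSet → {e : E | G.ends e = p} = ∅

/-- The condition `(♣)_δ`: `(δ-1)|E(S)| + 1 = δ(|S|-1)` for every vertex subset `S` inducing a
`2`-connected subgraph. -/
def ClubCond {V : Type*} (H : SimpleGraph V) (δ : ℕ) : Prop :=
  ∀ S : Set V, IsTwoConnected (H.induce S) →
    (δ - 1) * (edgesIn H S).ncard + 1 = δ * (S.ncard - 1)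

/-! ### Chordality, `K₄` minors, cycle attachments -/

/-- A chordless cycle: a cycle such that every edge of `G` between vertices of the cycle is an
edge of the cycle. -/
def IsChordlessCycle {V : Type*} (G : SimpleGraph V) {v : V} (c : G.Walk v v) : Prop :=
  c.IsCycle ∧ ∀ e ∈ edgesIn G {u : V | u ∈ c.support}, e ∈ c.edges

/-- `G` is `δ`-chordal: every cycle without a chord has exactly `δ + 1` edges. -/
def IsDeltaChordal {V : Type*} (G : SimpleGraph V) (δ : ℕ) : Prop :=
  ∀ (v : V) (c : G.Walk v v), IsChordlessCycle G c → c.length = δ + 1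

/-- `G` has a `K₄` minor: there are four disjoint nonempty connected branch sets pairwise
joined by an edge. -/
def HasK4Minor {V : Type*} (G : SimpleGraph V) : Prop :=
  ∃ B : Fin 4 → Set V, (∀ i, (B i).Nonempty) ∧ (∀ i, (G.induce (B i)).Connected) ∧
    (Pairwise fun i j => Disjoint (B i) (B j)) ∧
    (Pairwise fun i j => ∃ u ∈ B i, ∃ v ∈ B j, G.Adj u v)

/-- One step of attaching a new `(δ+1)`-cycle to an edge: `B` is obtained from `A` by adding
`δ - 1` new vertices forming a path of length `δ` between the endpoints of an edge of
`H[A]`, these being all new edges. -/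
def AttachStep {V : Type*} (H : SimpleGraph V) (δ : ℕ) (A B : Set V) : Prop :=
  ∃ q : Fin (δ + 1) → V, Function.Injective q ∧
    H.Adj (q 0) (q (Fin.last δ)) ∧ q 0 ∈ A ∧ q (Fin.last δ) ∈ A ∧
    (∀ i : Fin (δ + 1), i ≠ 0 → i ≠ Fin.last δ → q i ∉ A) ∧
    B = A ∪ {x | ∃ i : Fin (δ + 1), i ≠ 0 ∧ i ≠ Fin.last δ ∧ q i = x} ∧
    edgesIn H B = edgesIn H A ∪ {e | ∃ i : Fin δ, e = s(q i.castSucc, q i.succ)}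

/-- `H` can be constructed from the clique `K₂` by repeatedly attaching new `(δ+1)`-cycles to
edges of the preceding graph. -/
def ConstructibleFromK2 {V : Type*} (H : SimpleGraph V) (δ : ℕ) : Prop :=
  ∃ (k : ℕ) (S : Fin (k + 1) → Set V),
    (∃ u v : V, H.Adj u v ∧ S 0 = {u, v}) ∧
    S (Fin.last k) = Set.univ ∧
    ∀ i : Fin k, AttachStep H δ (S i.castSucc) (S i.succ)

/-! ### Gluings, subdivisions, collisions, ears -/

/-- `G` (with distinguished edge `ab`) is the gluing of the graphs `Gs i` along the edges
`es i`: the disjoint union with all the edges `es i` identified to the single edge `ab`. -/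
def IsGluing {ι : Type*} {Vf : ι → Type*} {W : Type*} (Gs : ∀ i, SimpleGraph (Vf i))
    (es : ∀ i, Sym2 (Vf i)) (G : SimpleGraph W) (a b : W) : Prop :=
  a ≠ b ∧ G.Adj a b ∧
  ∃ φ : ∀ i, Vf i → W,
    (∀ i, Function.Injective (φ i)) ∧
    (∀ x : W, ∃ i, x ∈ Set.range (φ i)) ∧
    (∀ i, Sym2.map (φ i) (es i) = s(a, b)) ∧
    (∀ i j, i ≠ j → Set.range (φ i) ∩ Set.range (φ j) = {a, b}) ∧
    ∀ x y : W, G.Adj x y ↔ ∃ i, ∃ u v, (Gs i).Adj u v ∧ φ i u = x ∧ φ i v = y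

/-- `G'` together with the path `q` is the subdivision of `G` obtained by replacing the edge
`uv` by a path of `m` edges `q 0, …, q m` through new vertices. -/
def IsSubdivisionAt {V W : Type*} (G : SimpleGraph V) (u v : V) {m : ℕ}
    (G' : SimpleGraph W) (q : Fin (m + 1) → W) : Prop :=
  ∃ φ : V → W, Function.Injective φ ∧ Function.Injective q ∧
    q 0 = φ u ∧ q (Fin.last m) = φ v ∧
    (∀ i : Fin (m + 1), i ≠ 0 → i ≠ Fin.last m → q i ∉ Set.range φ) ∧
    (∀ x : W, x ∈ Set.range φ ∨ x ∈ Set.range q) ∧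
    ∀ x y : W, G'.Adj x y ↔
      ((∃ a b : V, G.Adj a b ∧ s(a, b) ≠ s(u, v) ∧ φ a = x ∧ φ b = y) ∨
       ∃ i : Fin m, s(x, y) = s(q i.castSucc, q i.succ))

/-- `G` (with the distinguished nonadjacent pair `a b`) is the collision of `G₁` and `G₂` on
the edges `e₁, e₂`: the disjoint union with `e₁` and `e₂` identified and then deleted. -/
def IsCollision {V₁ V₂ W : Type*} (G₁ : SimpleGraph V₁) (G₂ : SimpleGraph V₂)
    (e₁ : Sym2 V₁) (e₂ : Sym2 V₂) (G : SimpleGraph W) (a b : W) : Prop :=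
  a ≠ b ∧ ¬ G.Adj a b ∧
  ∃ (φ₁ : V₁ → W) (φ₂ : V₂ → W),
    Function.Injective φ₁ ∧ Function.Injective φ₂ ∧
    Sym2.map φ₁ e₁ = s(a, b) ∧ Sym2.map φ₂ e₂ = s(a, b) ∧
    (∀ x : W, x ∈ Set.range φ₁ ∨ x ∈ Set.range φ₂) ∧
    Set.range φ₁ ∩ Set.range φ₂ = {a, b} ∧
    ∀ x y : W, G.Adj x y ↔
      ((∃ u v, G₁.Adj u v ∧ s(u, v) ≠ e₁ ∧ φ₁ u = x ∧ φ₁ v = y) ∨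
       (∃ u v, G₂.Adj u v ∧ s(u, v) ≠ e₂ ∧ φ₂ u = x ∧ φ₂ v = y))

/-- The inner vertices of an ear. -/
def earInner {V : Type*} {s : ℕ} (p : Fin (s + 1) → V) : Set V :=
  {x | ∃ i : Fin (s + 1), i ≠ 0 ∧ i ≠ Fin.last s ∧ p i = x}

/-- The edges of an ear. -/
def earEdges {V : Type*} {s : ℕ} (p : Fin (s + 1) → V) : Set (Sym2 V) :=
  {e | ∃ i : Fin s, e = s(p i.castSucc, p i.succ)}

/-- An `s`-ear of `G`: a path with `s` edges whose inner vertices have degree `2` in `G`. -/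
def IsEar {V : Type*} (G : SimpleGraph V) {s : ℕ} (p : Fin (s + 1) → V) : Prop :=
  Function.Injective p ∧ (∀ i : Fin s, G.Adj (p i.castSucc) (p i.succ)) ∧
  ∀ i : Fin (s + 1), i ≠ 0 → i ≠ Fin.last s → (G.neighborSet (p i)).ncard = 2

/-- `T` is the vertex set of an inclusion-maximal proper `2`-connected induced subgraph. -/
def IsMaxProperTwoConnected {V : Type*} (G : SimpleGraph V) (T : Set V) : Prop :=
  IsTwoConnected (G.induce T) ∧ T ≠ Set.univ ∧
  ∀ T' : Set V, T ⊆ T' → T' ≠ Set.univ → IsTwoConnected (G.induce T') → T' = T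

/-! ### `(♠)₂` and `3`-connectivity -/

/-- A `2`-connected graph satisfies the equalities `(♠)₂`:
`|E| = 2(|V|-1)` and `|E(S)| = 2|S| - 3` for every good flat `S`. -/
def Spade2 {V : Type*} (G : SimpleGraph V) : Prop :=
  IsTwoConnected G ∧ G.edgeSet.ncard = 2 * (Nat.card V - 1) ∧
  ∀ S : Set V, IsGoodFlat G S → (edgesIn G S).ncard = 2 * S.ncard - 3

/-- A graph is `3`-connected if it has more than `3` vertices and remains connected after
deletion of any two vertices. -/
def IsThreeConnected {V : Type*} (G : SimpleGraph V) : Prop :=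
  3 < Nat.card V ∧ ∀ u v : V, (G.induce {x : V | x ≠ u ∧ x ≠ v}).Connected

/-! ### Inductive constructions -/

/-- Graphs obtainable from the `δ`-cycle by gluings (Proposition `construction1`) and
`(δ-1)`-subdivisions (Proposition `construction2`). -/
inductive Obtainable (δ : ℕ) : {W : Type} → SimpleGraph W → Prop
  | cycle {W : Type} (G : SimpleGraph W) (e : G ≃g SimpleGraph.cycleGraph δ) :
      Obtainable δ G
  | glue {Vf : Fin (δ - 1) → Type} {W : Type}
      (Gs : ∀ i, SimpleGraph (Vf i)) (ws : ∀ i, Sym2 (Vf i) → ℕ) (es : ∀ i, Sym2 (Vf i))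
      (G : SimpleGraph W) (a b : W)
      (hob : ∀ i, Obtainable δ (Gs i))
      (hsp : ∀ i, SatisfiesSpade (Gs i) δ (ws i))
      (hes : ∀ i, es i ∈ (Gs i).edgeSet)
      (hwe : ∀ i, ws i (es i) = δ - 1)
      (hgl : IsGluing Gs es G a b) : Obtainable δ G
  | subdivide {V W : Type} (G : SimpleGraph V) (w : Sym2 V → ℕ) (u v : V)
      (G' : SimpleGraph W) (q : Fin (δ - 1 + 1) → W)
      (hob : Obtainable δ G) (hsp : SatisfiesSpade G δ w)
      (huv : G.Adj u v) (hw1 : w s(u, v) = 1)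
      (hsub : IsSubdivisionAt G u v G' q) : Obtainable δ G'

/-- Graphs obtainable from the clique `K₄` by a finite sequence of collisions. -/
inductive ObtainableK4 : {W : Type} → SimpleGraph W → Prop
  | k4 {W : Type} (G : SimpleGraph W) (e : G ≃g (⊤ : SimpleGraph (Fin 4))) :
      ObtainableK4 G
  | collide {V₁ V₂ W : Type} (G₁ : SimpleGraph V₁) (G₂ : SimpleGraph V₂)
      (e₁ : Sym2 V₁) (e₂ : Sym2 V₂) (G : SimpleGraph W) (a b : W)
      (h₁ : ObtainableK4 G₁) (h₂ : ObtainableK4 G₂)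
      (he₁ : e₁ ∈ G₁.edgeSet) (he₂ : e₂ ∈ G₂.edgeSet)
      (hc : IsCollision G₁ G₂ e₁ e₂ G a b) : ObtainableK4 G

open scoped Classical

section Toolkit

variable {α β : Type*}

lemma reachable_map {X : SimpleGraph α} {Y : SimpleGraph β} (f : α → β)
    (h : ∀ p q, X.Adj p q → Y.Reachable (f p) (f q)) {x y : α} (hr : X.Reachable x y) :
    Y.Reachable (f x) (f y) := by
  obtain ⟨w⟩ := hr
  induction w with
  | nil => exact Reachable.refl _
  | cons h' _ ih => exact (h _ _ h').trans ih

lemma connected_map {X : SimpleGraph α} {Y : SimpleGraph β} (f : α → β)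
    (hsurj : Function.Surjective f)
    (h : ∀ p q, X.Adj p q → Y.Reachable (f p) (f q)) (hX : X.Connected) : Y.Connected := by
  haveI : Nonempty β := hX.nonempty.map f
  refine ⟨fun c d => ?_⟩
  obtain ⟨p, rfl⟩ := hsurj c
  obtain ⟨q, rfl⟩ := hsurj d
  exact reachable_map f h (hX.preconnected p q)

lemma reachable_invariant {X : SimpleGraph α} (P : α → Prop)
    (h : ∀ p q, X.Adj p q → (P p ↔ P q)) {x y : α} (hr : X.Reachable x y) : P x ↔ P y := by
  obtain ⟨w⟩ := hr
  induction w with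
  | nil => exact Iff.rfl
  | cons h' _ ih => exact (h _ _ h').trans ih

lemma mem_edgesIn {V : Type*} {G : SimpleGraph V} {S : Set V} {x y : V} :
    s(x, y) ∈ edgesIn G S ↔ G.Adj x y ∧ x ∈ S ∧ y ∈ S := by
  constructor
  · rintro ⟨he, hv⟩
    exact ⟨he, hv x (by simp), hv y (by simp)⟩
  · rintro ⟨ha, hx, hy⟩
    refine ⟨ha, ?_⟩
    intro v hv
    rcases Sym2.mem_iff.mp hv with rfl | rfl
    · exact hx
    · exact hy

variable {V : Type*} {X : SimpleGraph V} {S : Set V}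

/-- component of the graph used in contraction -/
noncomputable abbrev cmp (X : SimpleGraph V) (S : Set V) (w : V) :
    (fromEdgeSet (edgesIn X S)).ConnectedComponent :=
  (fromEdgeSet (edgesIn X S)).connectedComponentMk w

lemma cm_adj {x y : V} (h : (fromEdgeSet (edgesIn X S)).Adj x y) :
    X.Adj x y ∧ x ∈ S ∧ y ∈ S := by
  rw [fromEdgeSet_adj] at h
  exact mem_edgesIn.mp h.1

lemma cm_single {x y : V} (hx : x ∉ S) (h : cmp X S x = cmp X S y) : x = y := by
  obtain ⟨w⟩ := ConnectedComponent.exact h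
  cases w with
  | nil => rfl
  | cons h' _ => exact absurd (cm_adj h').2.1 hx

lemma cm_dichot {x y : V} (h : cmp X S x = cmp X S y) : x = y ∨ (x ∈ S ∧ y ∈ S) := by
  by_cases hx : x ∈ S
  · by_cases hy : y ∈ S
    · exact Or.inr ⟨hx, hy⟩
    · exact Or.inl (cm_single hy h.symm).symm
  · exact Or.inl (cm_single hx h)

lemma cm_blob (hcon : (X.induce S).Connected) {x y : V} (hx : x ∈ S) (hy : y ∈ S) :
    cmp X S x = cmp X S y := by
  have hr := hcon.preconnected ⟨x, hx⟩ ⟨y, hy⟩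
  refine ConnectedComponent.sound ?_
  refine reachable_map (X := X.induce S) (fun z => (z : V)) ?_ hr
  intro p q hpq
  have hadj : X.Adj (p : V) (q : V) := hpq
  refine Adj.reachable ?_
  rw [fromEdgeSet_adj]
  exact ⟨mem_edgesIn.mpr ⟨hadj, p.2, q.2⟩, hadj.ne⟩

lemma contract_adj_mk {F : Set (Sym2 V)} {u v : V} (h : X.Adj u v)
    (hne : (fromEdgeSet F).connectedComponentMk u ≠ (fromEdgeSet F).connectedComponentMk v) :
    (contractEdges X F).Adj ((fromEdgeSet F).connectedComponentMk u)
      ((fromEdgeSet F).connectedComponentMk v) := by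
  show (fromRel _).Adj _ _
  rw [fromRel_adj]
  exact ⟨hne, Or.inl ⟨u, v, h, rfl, rfl⟩⟩

lemma contract_adj_elim {F : Set (Sym2 V)}
    {c d : (fromEdgeSet F).ConnectedComponent} (h : (contractEdges X F).Adj c d) :
    ∃ u v, X.Adj u v ∧ (fromEdgeSet F).connectedComponentMk u = c ∧
      (fromEdgeSet F).connectedComponentMk v = d := by
  have h' : (fromRel fun c d => ∃ u v : V, X.Adj u v ∧
      (fromEdgeSet F).connectedComponentMk u = c ∧
      (fromEdgeSet F).connectedComponentMk v = d).Adj c d := h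
  rw [fromRel_adj] at h'
  rcases h'.2 with ⟨u, v, huv, hu, hv⟩ | ⟨u, v, huv, hu, hv⟩
  · exact ⟨u, v, huv, hu, hv⟩
  · exact ⟨v, u, huv.symm, hv, hu⟩

end Toolkit

section Coll

structure CollData {V₁ V₂ W : Type*} (G₁ : SimpleGraph V₁) (G₂ : SimpleGraph V₂)
    (e₁ : Sym2 V₁) (e₂ : Sym2 V₂) (G : SimpleGraph W) (a b : W) where
  hab : a ≠ b
  hnadj : ¬ G.Adj a b
  φ₁ : V₁ → W
  φ₂ : V₂ → W
  inj₁ : Function.Injective φ₁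
  inj₂ : Function.Injective φ₂
  u₁ : V₁
  v₁ : V₁
  u₂ : V₂
  v₂ : V₂
  he₁ : e₁ = s(u₁, v₁)
  he₂ : e₂ = s(u₂, v₂)
  hu₁ : φ₁ u₁ = a
  hv₁ : φ₁ v₁ = b
  hu₂ : φ₂ u₂ = a
  hv₂ : φ₂ v₂ = b
  adj₁ : G₁.Adj u₁ v₁
  adj₂ : G₂.Adj u₂ v₂
  cover : ∀ x : W, x ∈ Set.range φ₁ ∨ x ∈ Set.range φ₂
  inter : Set.range φ₁ ∩ Set.range φ₂ = {a, b}
  adj_iff : ∀ x y : W, G.Adj x y ↔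
      ((∃ u v, G₁.Adj u v ∧ s(u, v) ≠ e₁ ∧ φ₁ u = x ∧ φ₁ v = y) ∨
       (∃ u v, G₂.Adj u v ∧ s(u, v) ≠ e₂ ∧ φ₂ u = x ∧ φ₂ v = y))

variable {V₁ V₂ W : Type*} {G₁ : SimpleGraph V₁} {G₂ : SimpleGraph V₂}
  {e₁ : Sym2 V₁} {e₂ : Sym2 V₂} {G : SimpleGraph W} {a b : W}

lemma exists_collData (hc : IsCollision G₁ G₂ e₁ e₂ G a b)
    (he₁ : e₁ ∈ G₁.edgeSet) (he₂ : e₂ ∈ G₂.edgeSet) :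
    Nonempty (CollData G₁ G₂ e₁ e₂ G a b) := by
  obtain ⟨hab, hnadj, φ₁, φ₂, inj₁, inj₂, hm₁, hm₂, cover, inter, adj_iff⟩ := hc
  obtain ⟨x₁, y₁, hxy₁⟩ : ∃ x y, e₁ = s(x, y) := by
    induction e₁ using Sym2.ind with | _ x y => exact ⟨x, y, rfl⟩
  obtain ⟨x₂, y₂, hxy₂⟩ : ∃ x y, e₂ = s(x, y) := by
    induction e₂ using Sym2.ind with | _ x y => exact ⟨x, y, rfl⟩
  have hadj₁ : G₁.Adj x₁ y₁ := by rwa [hxy₁, mem_edgeSet] at he₁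
  have hadj₂ : G₂.Adj x₂ y₂ := by rwa [hxy₂, mem_edgeSet] at he₂
  rw [hxy₁, Sym2.map_pair_eq, Sym2.eq_iff] at hm₁
  rw [hxy₂, Sym2.map_pair_eq, Sym2.eq_iff] at hm₂
  obtain ⟨u₁, v₁, he₁', hu₁, hv₁, hadj₁'⟩ :
      ∃ u v, e₁ = s(u, v) ∧ φ₁ u = a ∧ φ₁ v = b ∧ G₁.Adj u v := by
    rcases hm₁ with ⟨h1, h2⟩ | ⟨h1, h2⟩
    · exact ⟨x₁, y₁, hxy₁, h1, h2, hadj₁⟩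
    · exact ⟨y₁, x₁, hxy₁.trans (Sym2.eq_swap), h2, h1, hadj₁.symm⟩
  obtain ⟨u₂, v₂, he₂', hu₂, hv₂, hadj₂'⟩ :
      ∃ u v, e₂ = s(u, v) ∧ φ₂ u = a ∧ φ₂ v = b ∧ G₂.Adj u v := by
    rcases hm₂ with ⟨h1, h2⟩ | ⟨h1, h2⟩
    · exact ⟨x₂, y₂, hxy₂, h1, h2, hadj₂⟩
    · exact ⟨y₂, x₂, hxy₂.trans (Sym2.eq_swap), h2, h1, hadj₂.symm⟩
  exact ⟨⟨hab, hnadj, φ₁, φ₂, inj₁, inj₂, u₁, v₁, u₂, v₂, he₁', he₂', hu₁, hv₁, hu₂, hv₂,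
    hadj₁', hadj₂', cover, inter, adj_iff⟩⟩

namespace CollData

def swapAB (D : CollData G₁ G₂ e₁ e₂ G a b) : CollData G₁ G₂ e₁ e₂ G b a where
  hab := D.hab.symm
  hnadj := fun h => D.hnadj h.symm
  φ₁ := D.φ₁
  φ₂ := D.φ₂
  inj₁ := D.inj₁
  inj₂ := D.inj₂
  u₁ := D.v₁
  v₁ := D.u₁
  u₂ := D.v₂
  v₂ := D.u₂
  he₁ := D.he₁.trans (Sym2.eq_swap)
  he₂ := D.he₂.trans (Sym2.eq_swap)
  hu₁ := D.hv₁
  hv₁ := D.hu₁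
  hu₂ := D.hv₂
  hv₂ := D.hu₂
  adj₁ := D.adj₁.symm
  adj₂ := D.adj₂.symm
  cover := D.cover
  inter := D.inter.trans (Set.pair_comm a b)
  adj_iff := D.adj_iff

def swapSides (D : CollData G₁ G₂ e₁ e₂ G a b) : CollData G₂ G₁ e₂ e₁ G a b where
  hab := D.hab
  hnadj := D.hnadj
  φ₁ := D.φ₂
  φ₂ := D.φ₁
  inj₁ := D.inj₂
  inj₂ := D.inj₁
  u₁ := D.u₂
  v₁ := D.v₂
  u₂ := D.u₁
  v₂ := D.v₁
  he₁ := D.he₂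
  he₂ := D.he₁
  hu₁ := D.hu₂
  hv₁ := D.hv₂
  hu₂ := D.hu₁
  hv₂ := D.hv₁
  adj₁ := D.adj₂
  adj₂ := D.adj₁
  cover := fun x => (D.cover x).symm
  inter := by rw [Set.inter_comm]; exact D.inter
  adj_iff := fun x y => by rw [D.adj_iff]; exact or_comm

variable (D : CollData G₁ G₂ e₁ e₂ G a b)

lemma aR₁ : a ∈ Set.range D.φ₁ := ⟨D.u₁, D.hu₁⟩
lemma bR₁ : b ∈ Set.range D.φ₁ := ⟨D.v₁, D.hv₁⟩
lemma aR₂ : a ∈ Set.range D.φ₂ := ⟨D.u₂, D.hu₂⟩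
lemma bR₂ : b ∈ Set.range D.φ₂ := ⟨D.v₂, D.hv₂⟩

lemma mem_ab {x : W} (h1 : x ∈ Set.range D.φ₁) (h2 : x ∈ Set.range D.φ₂) :
    x = a ∨ x = b := by
  have : x ∈ ({a, b} : Set W) := D.inter ▸ Set.mem_inter h1 h2
  simpa using this

lemma hm₂' : Sym2.map D.φ₂ e₂ = s(a, b) :=
  (congrArg (Sym2.map D.φ₂) D.he₂).trans (by rw [Sym2.map_pair_eq, D.hu₂, D.hv₂])

lemma hm₁' : Sym2.map D.φ₁ e₁ = s(a, b) :=
  (congrArg (Sym2.map D.φ₁) D.he₁).trans (by rw [Sym2.map_pair_eq, D.hu₁, D.hv₁])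

lemma adj_of₁ {p q : V₁} (h : G₁.Adj p q) (hne : s(p, q) ≠ e₁) :
    G.Adj (D.φ₁ p) (D.φ₁ q) :=
  (D.adj_iff _ _).mpr (Or.inl ⟨p, q, h, hne, rfl, rfl⟩)

lemma adj_of₂ {p q : V₂} (h : G₂.Adj p q) (hne : s(p, q) ≠ e₂) :
    G.Adj (D.φ₂ p) (D.φ₂ q) :=
  (D.adj_iff _ _).mpr (Or.inr ⟨p, q, h, hne, rfl, rfl⟩)

lemma adj_side {x y : W} (h : G.Adj x y) :
    (x ∈ Set.range D.φ₁ ∧ y ∈ Set.range D.φ₁) ∨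
    (x ∈ Set.range D.φ₂ ∧ y ∈ Set.range D.φ₂) := by
  rcases (D.adj_iff x y).mp h with ⟨u, v, _, _, hu, hv⟩ | ⟨u, v, _, _, hu, hv⟩
  · exact Or.inl ⟨⟨u, hu⟩, ⟨v, hv⟩⟩
  · exact Or.inr ⟨⟨u, hu⟩, ⟨v, hv⟩⟩

lemma adj_pull₁ {x y : W} (h : G.Adj x y) (hx : x ∈ Set.range D.φ₁)
    (hy : y ∈ Set.range D.φ₁) :
    ∃ p q, G₁.Adj p q ∧ s(p, q) ≠ e₁ ∧ D.φ₁ p = x ∧ D.φ₁ q = y := by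
  rcases (D.adj_iff x y).mp h with ⟨p, q, h', hne, hp, hq⟩ | ⟨p, q, h', hne, hp, hq⟩
  · exact ⟨p, q, h', hne, hp, hq⟩
  · exfalso
    have hx2 : x ∈ Set.range D.φ₂ := ⟨p, hp⟩
    have hy2 : y ∈ Set.range D.φ₂ := ⟨q, hq⟩
    have hxy : s(x, y) = s(a, b) := by
      rcases D.mem_ab hx hx2 with rfl | rfl <;> rcases D.mem_ab hy hy2 with rfl | rfl
      · exact absurd rfl h.ne
      · rfl
      · exact Sym2.eq_swap
      · exact absurd rfl h.ne
    have : Sym2.map D.φ₂ s(p, q) = Sym2.map D.φ₂ e₂ := by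
      rw [Sym2.map_pair_eq, hp, hq, hxy, D.hm₂']
    exact hne (Sym2.map.injective D.inj₂ this)

lemma adj_pull₂ {x y : W} (h : G.Adj x y) (hx : x ∈ Set.range D.φ₂)
    (hy : y ∈ Set.range D.φ₂) :
    ∃ p q, G₂.Adj p q ∧ s(p, q) ≠ e₂ ∧ D.φ₂ p = x ∧ D.φ₂ q = y :=
  D.swapSides.adj_pull₁ h hx hy

noncomputable def ρ (t : V₁) (w : W) : V₁ :=
  letI : Nonempty V₁ := ⟨t⟩
  if w ∈ Set.range D.φ₁ then Function.invFun D.φ₁ w else t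

lemma ρ_spec {t : V₁} {w : W} (h : w ∈ Set.range D.φ₁) : D.φ₁ (D.ρ t w) = w := by
  letI : Nonempty V₁ := ⟨t⟩
  rw [ρ, if_pos h]
  exact Function.invFun_eq h

lemma ρ_phi {t : V₁} (x : V₁) : D.ρ t (D.φ₁ x) = x :=
  D.inj₁ (D.ρ_spec ⟨x, rfl⟩)

lemma ρ_out {t : V₁} {w : W} (h : w ∉ Set.range D.φ₁) : D.ρ t w = t := by
  letI : Nonempty V₁ := ⟨t⟩
  rw [ρ, if_neg h]

lemma ρ_a {t : V₁} : D.ρ t a = D.u₁ :=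
  (congrArg (D.ρ t) D.hu₁.symm).trans (D.ρ_phi D.u₁)

lemma ρ_b {t : V₁} : D.ρ t b = D.v₁ :=
  (congrArg (D.ρ t) D.hv₁.symm).trans (D.ρ_phi D.v₁)

end CollData
lemma three_le_card {V : Type*} [Fintype V] {X : SimpleGraph V} (h : Spade2 X)
    {e : Sym2 V} (he : e ∈ X.edgeSet) : 3 ≤ Nat.card V := by
  obtain ⟨htc, hcard, -⟩ := h
  haveI : Nonempty V := htc.1.nonempty
  have h1 : Nat.card V ≠ 0 := Nat.card_ne_zero.mpr ⟨‹Nonempty V›, inferInstance⟩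
  have hne : X.edgeSet.ncard ≠ 0 := by
    intro h0
    rw [Set.ncard_eq_zero (Set.toFinite _)] at h0
    rw [h0] at he
    exact he
  have h2 : Nat.card V ≠ 2 := by
    intro h2
    obtain ⟨x, y, hxy, huniv⟩ := Nat.card_eq_two_iff.mp h2
    have hmem : ∀ z : V, z = x ∨ z = y := by
      intro z
      have : z ∈ ({x, y} : Set V) := huniv ▸ Set.mem_univ z
      simpa using this
    have hsub : X.edgeSet ⊆ {s(x, y)} := by
      intro e' he'
      induction e' using Sym2.ind with
      | _ p q =>
        have hadj : X.Adj p q := he'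
        rcases hmem p with rfl | rfl <;> rcases hmem q with rfl | rfl
        · exact absurd rfl hadj.ne
        · simp
        · exact Set.mem_singleton_iff.mpr Sym2.eq_swap
        · exact absurd rfl hadj.ne
    have hle := Set.ncard_le_ncard hsub (Set.toFinite _)
    rw [Set.ncard_singleton] at hle
    rw [hcard, h2] at hle
    omega
  have h1' : Nat.card V ≠ 1 := by
    intro h1'
    rw [h1'] at hcard
    simp at hcard
    exact hne hcard
  omega

lemma exists_third {V : Type*} [Fintype V] (h3 : 3 ≤ Nat.card V) (x y : V) :
    ∃ z : V, z ≠ x ∧ z ≠ y := by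
  by_contra hcon
  push_neg at hcon
  have hsub : (Set.univ : Set V) ⊆ {x, y} := by
    intro z _
    by_cases hz : z = x
    · simp [hz]
    · simp [hcon z hz]
  have hle := Set.ncard_le_ncard hsub (Set.toFinite _)
  rw [Set.ncard_univ] at hle
  have h2 : ({x, y} : Set V).ncard ≤ 2 := by
    refine le_trans (Set.ncard_insert_le _ _) ?_
    simp [Set.ncard_singleton]
  omega

namespace CollData

variable {V₁ V₂ W : Type*} {G₁ : SimpleGraph V₁} {G₂ : SimpleGraph V₂}
  {e₁ : Sym2 V₁} {e₂ : Sym2 V₂} {G : SimpleGraph W} {a b : W}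
  (D : CollData G₁ G₂ e₁ e₂ G a b)

include D

lemma une : D.u₁ ≠ D.v₁ := D.adj₁.ne
lemma une₂ : D.u₂ ≠ D.v₂ := D.adj₂.ne

lemma reach₂ (h₂tc : IsTwoConnected G₂) {T : Set W} {z : V₂}
    (hz : z = D.u₂ ∨ z = D.v₂) (hT : ∀ y : V₂, y ≠ z → D.φ₂ y ∈ T)
    {p q : V₂} (hp : p ≠ z) (hq : q ≠ z) :
    (G.induce T).Reachable ⟨D.φ₂ p, hT p hp⟩ ⟨D.φ₂ q, hT q hq⟩ := by
  have hr : (G₂.induce {u : V₂ | u ≠ z}).Reachable ⟨p, hp⟩ ⟨q, hq⟩ :=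
    (h₂tc.2 z).preconnected ⟨p, hp⟩ ⟨q, hq⟩
  refine reachable_map (X := G₂.induce {u : V₂ | u ≠ z}) (Y := G.induce T)
    (fun w => (⟨D.φ₂ (w : V₂), hT _ w.2⟩ : T)) ?_ hr
  intro r s hrs
  have hadj : G₂.Adj (r : V₂) (s : V₂) := hrs
  have hne : s((r : V₂), (s : V₂)) ≠ e₂ := by
    intro hEq
    rw [D.he₂, Sym2.eq_iff] at hEq
    rcases hz with rfl | rfl
    · rcases hEq with ⟨h1, _⟩ | ⟨_, h2⟩
      · exact r.2 h1
      · exact s.2 h2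
    · rcases hEq with ⟨_, h2⟩ | ⟨h1, _⟩
      · exact s.2 h2
      · exact r.2 h1
  exact Adj.reachable (D.adj_of₂ hadj hne)

lemma reach₁ (h₁tc : IsTwoConnected G₁) {T : Set W} {z : V₁}
    (hT : ∀ x : V₁, x ≠ z → D.φ₁ x ∈ T)
    (hpatch : ∀ (hA : a ∈ T) (hB : b ∈ T), (G.induce T).Reachable ⟨a, hA⟩ ⟨b, hB⟩)
    {p q : V₁} (hp : p ≠ z) (hq : q ≠ z) :
    (G.induce T).Reachable ⟨D.φ₁ p, hT p hp⟩ ⟨D.φ₁ q, hT q hq⟩ := by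
  have hr : (G₁.induce {u : V₁ | u ≠ z}).Reachable ⟨p, hp⟩ ⟨q, hq⟩ :=
    (h₁tc.2 z).preconnected ⟨p, hp⟩ ⟨q, hq⟩
  refine reachable_map (X := G₁.induce {u : V₁ | u ≠ z}) (Y := G.induce T)
    (fun w => (⟨D.φ₁ (w : V₁), hT _ w.2⟩ : T)) ?_ hr
  intro r s hrs
  have hadj : G₁.Adj (r : V₁) (s : V₁) := hrs
  by_cases hne : s((r : V₁), (s : V₁)) = e₁
  · have hcase : ((r : V₁) = D.u₁ ∧ (s : V₁) = D.v₁) ∨ ((r : V₁) = D.v₁ ∧ (s : V₁) = D.u₁) :=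
      Sym2.eq_iff.mp (hne.trans D.he₁)
    rcases hcase with ⟨h1, h2⟩ | ⟨h1, h2⟩
    · have hA : a ∈ T := by rw [← D.hu₁, ← h1]; exact hT _ r.2
      have hB : b ∈ T := by rw [← D.hv₁, ← h2]; exact hT _ s.2
      have e1 : (⟨D.φ₁ (r : V₁), hT _ r.2⟩ : T) = ⟨a, hA⟩ :=
        Subtype.ext (show D.φ₁ (r : V₁) = a by rw [h1, D.hu₁])
      have e2 : (⟨D.φ₁ (s : V₁), hT _ s.2⟩ : T) = ⟨b, hB⟩ :=
        Subtype.ext (show D.φ₁ (s : V₁) = b by rw [h2, D.hv₁])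
      beta_reduce
      rw [e1, e2]
      exact hpatch hA hB
    · have hA : a ∈ T := by rw [← D.hu₁, ← h2]; exact hT _ s.2
      have hB : b ∈ T := by rw [← D.hv₁, ← h1]; exact hT _ r.2
      have e1 : (⟨D.φ₁ (r : V₁), hT _ r.2⟩ : T) = ⟨b, hB⟩ :=
        Subtype.ext (show D.φ₁ (r : V₁) = b by rw [h1, D.hv₁])
      have e2 : (⟨D.φ₁ (s : V₁), hT _ s.2⟩ : T) = ⟨a, hA⟩ :=
        Subtype.ext (show D.φ₁ (s : V₁) = a by rw [h2, D.hu₁])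
      beta_reduce
      rw [e1, e2]
      exact (hpatch hA hB).symm
  · exact Adj.reachable (D.adj_of₁ hadj hne)

lemma reach_ab [Fintype V₂] (h₂tc : IsTwoConnected G₂) (h3 : 3 ≤ Nat.card V₂)
    {T : Set W} (hT : ∀ y : V₂, D.φ₂ y ∈ T) (hA : a ∈ T) (hB : b ∈ T) :
    (G.induce T).Reachable ⟨a, hA⟩ ⟨b, hB⟩ := by
  obtain ⟨w₀, hw₀u, hw₀v⟩ := exists_third h3 D.u₂ D.v₂
  have r1 : (G.induce T).Reachable ⟨D.φ₂ D.u₂, hT _⟩ ⟨D.φ₂ w₀, hT _⟩ :=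
    D.reach₂ h₂tc (z := D.v₂) (Or.inr rfl) (fun y _ => hT y) D.une₂ hw₀v
  have r2 : (G.induce T).Reachable ⟨D.φ₂ w₀, hT _⟩ ⟨D.φ₂ D.v₂, hT _⟩ :=
    D.reach₂ h₂tc (z := D.u₂) (Or.inl rfl) (fun y _ => hT y) hw₀u (Ne.symm D.une₂)
  have e1 : (⟨a, hA⟩ : T) = ⟨D.φ₂ D.u₂, hT _⟩ := Subtype.ext D.hu₂.symm
  have e2 : (⟨b, hB⟩ : T) = ⟨D.φ₂ D.v₂, hT _⟩ := Subtype.ext D.hv₂.symm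
  rw [e1, e2]
  exact r1.trans r2

lemma conn_del_a (h₁tc : IsTwoConnected G₁) (h₂tc : IsTwoConnected G₂) :
    (G.induce {u : W | u ≠ a}).Connected := by
  set T : Set W := {u : W | u ≠ a} with hTdef
  have hB : b ∈ T := Ne.symm D.hab
  have claim : ∀ c : T, (G.induce T).Reachable c ⟨b, hB⟩ := by
    intro c
    rcases D.cover (c : W) with ⟨x, hx⟩ | ⟨y, hy⟩
    · have hxz : x ≠ D.u₁ := by
        intro h
        exact c.2 (by rw [← hx, h, D.hu₁])
      have hT1 : ∀ x' : V₁, x' ≠ D.u₁ → D.φ₁ x' ∈ T := by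
        intro x' hx'
        intro hEq
        exact hx' (D.inj₁ (hEq.trans D.hu₁.symm))
      have hr := D.reach₁ h₁tc hT1 (fun hA _ => absurd rfl hA) hxz (Ne.symm D.une)
      have e1 : (⟨D.φ₁ x, hT1 x hxz⟩ : T) = c := Subtype.ext hx
      have e2 : (⟨D.φ₁ D.v₁, hT1 _ (Ne.symm D.une)⟩ : T) = ⟨b, hB⟩ := Subtype.ext D.hv₁
      rwa [e1, e2] at hr
    · have hyz : y ≠ D.u₂ := by
        intro h
        exact c.2 (by rw [← hy, h, D.hu₂])
      have hT2 : ∀ y' : V₂, y' ≠ D.u₂ → D.φ₂ y' ∈ T := by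
        intro y' hy' hEq
        exact hy' (D.inj₂ (hEq.trans D.hu₂.symm))
      have hr := D.reach₂ h₂tc (z := D.u₂) (Or.inl rfl) hT2 hyz (Ne.symm D.une₂)
      have e1 : (⟨D.φ₂ y, hT2 y hyz⟩ : T) = c := Subtype.ext hy
      have e2 : (⟨D.φ₂ D.v₂, hT2 _ (Ne.symm D.une₂)⟩ : T) = ⟨b, hB⟩ := Subtype.ext D.hv₂
      rwa [e1, e2] at hr
  haveI : Nonempty T := ⟨⟨b, hB⟩⟩
  exact ⟨fun c d => (claim c).trans (claim d).symm⟩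

lemma conn_del_1 [Fintype V₂] (h₁tc : IsTwoConnected G₁) (h₂tc : IsTwoConnected G₂)
    (h3₂ : 3 ≤ Nat.card V₂) (x₀ : V₁) (h0u : x₀ ≠ D.u₁) (h0v : x₀ ≠ D.v₁) :
    (G.induce {u : W | u ≠ D.φ₁ x₀}).Connected := by
  set T : Set W := {u : W | u ≠ D.φ₁ x₀} with hTdef
  have hside2 : ∀ y : V₂, D.φ₂ y ∈ T := by
    intro y hEq
    have h1 : D.φ₁ x₀ ∈ Set.range D.φ₁ := ⟨x₀, rfl⟩
    have h2 : D.φ₁ x₀ ∈ Set.range D.φ₂ := ⟨y, hEq⟩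
    rcases D.mem_ab h1 h2 with h | h
    · exact h0u (D.inj₁ (h.trans D.hu₁.symm))
    · exact h0v (D.inj₁ (h.trans D.hv₁.symm))
  have hA : a ∈ T := by
    intro hEq
    exact h0u (D.inj₁ (D.hu₁.trans hEq)).symm
  have hB : b ∈ T := by
    intro hEq
    exact h0v (D.inj₁ (D.hv₁.trans hEq)).symm
  have rab := D.reach_ab h₂tc h3₂ hside2 hA hB
  have claim : ∀ c : T, (G.induce T).Reachable c ⟨a, hA⟩ := by
    intro c
    rcases D.cover (c : W) with ⟨x, hx⟩ | ⟨y, hy⟩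
    · have hxz : x ≠ x₀ := by
        intro h
        exact c.2 (by rw [← hx, h])
      have hT1 : ∀ x' : V₁, x' ≠ x₀ → D.φ₁ x' ∈ T := by
        intro x' hx' hEq
        exact hx' (D.inj₁ hEq)
      have hr := D.reach₁ h₁tc hT1 (fun hA' hB' => rab) hxz (Ne.symm h0u)
      have e1 : (⟨D.φ₁ x, hT1 x hxz⟩ : T) = c := Subtype.ext hx
      have e2 : (⟨D.φ₁ D.u₁, hT1 _ (Ne.symm h0u)⟩ : T) = ⟨a, hA⟩ := Subtype.ext D.hu₁
      rwa [e1, e2] at hr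
    · by_cases hyv : y = D.v₂
      · have e1 : c = ⟨b, hB⟩ := Subtype.ext (by rw [← hy, hyv, D.hv₂])
        rw [e1]
        exact rab.symm
      · have hr := D.reach₂ h₂tc (z := D.v₂) (Or.inr rfl) (fun y' _ => hside2 y') hyv D.une₂
        have e1 : (⟨D.φ₂ y, hside2 y⟩ : T) = c := Subtype.ext hy
        have e2 : (⟨D.φ₂ D.u₂, hside2 _⟩ : T) = ⟨a, hA⟩ := Subtype.ext D.hu₂
        rwa [e1, e2] at hr
  haveI : Nonempty T := ⟨⟨a, hA⟩⟩
  exact ⟨fun c d => (claim c).trans (claim d).symm⟩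

lemma conn_G [Fintype V₁] [Fintype V₂] (h₁tc : IsTwoConnected G₁) (h₂tc : IsTwoConnected G₂)
    (h3₁ : 3 ≤ Nat.card V₁) (h3₂ : 3 ≤ Nat.card V₂) : G.Connected := by
  have huniv : (G.induce (Set.univ : Set W)).Connected := by
    have hT : ∀ y : V₂, D.φ₂ y ∈ (Set.univ : Set W) := fun _ => Set.mem_univ _
    have rab := D.reach_ab h₂tc h3₂ hT (Set.mem_univ a) (Set.mem_univ b)
    have claim : ∀ c : (Set.univ : Set W), (G.induce (Set.univ : Set W)).Reachable c ⟨a, Set.mem_univ a⟩ := by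
      intro c
      rcases D.cover (c : W) with ⟨x, hx⟩ | ⟨y, hy⟩
      · obtain ⟨z, hz1, hz2⟩ := exists_third h3₁ x D.u₁
        have hr := D.reach₁ h₁tc (z := z) (fun x' _ => Set.mem_univ _) (fun hA' hB' => rab) (Ne.symm hz1) (Ne.symm hz2)
        have e1 : (⟨D.φ₁ x, Set.mem_univ _⟩ : ↥(Set.univ : Set W)) = c := Subtype.ext hx
        have e2 : (⟨D.φ₁ D.u₁, Set.mem_univ _⟩ : ↥(Set.univ : Set W)) = ⟨a, Set.mem_univ a⟩ := Subtype.ext D.hu₁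
        rwa [e1, e2] at hr
      · by_cases hyv : y = D.v₂
        · have e1 : c = (⟨b, Set.mem_univ b⟩ : ↥(Set.univ : Set W)) := Subtype.ext (by rw [← hy, hyv, D.hv₂])
          rw [e1]
          exact rab.symm
        · have hr := D.reach₂ h₂tc (z := D.v₂) (Or.inr rfl) (fun y' _ => Set.mem_univ _) hyv D.une₂
          have e1 : (⟨D.φ₂ y, Set.mem_univ _⟩ : ↥(Set.univ : Set W)) = c := Subtype.ext hy
          have e2 : (⟨D.φ₂ D.u₂, Set.mem_univ _⟩ : ↥(Set.univ : Set W)) = ⟨a, Set.mem_univ a⟩ := Subtype.ext D.hu₂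
          rwa [e1, e2] at hr
    haveI : Nonempty (Set.univ : Set W) := ⟨⟨a, Set.mem_univ a⟩⟩
    exact ⟨fun c d => (claim c).trans (claim d).symm⟩
  refine connected_map (X := G.induce (Set.univ : Set W)) (Y := G) (fun w => (w : W))
    (fun w => ⟨⟨w, Set.mem_univ w⟩, rfl⟩) ?_ huniv
  intro p q hpq
  exact Adj.reachable hpq

lemma twoConnG [Fintype V₁] [Fintype V₂] (h₁tc : IsTwoConnected G₁) (h₂tc : IsTwoConnected G₂)
    (h3₁ : 3 ≤ Nat.card V₁) (h3₂ : 3 ≤ Nat.card V₂) : IsTwoConnected G := by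
  refine ⟨D.conn_G h₁tc h₂tc h3₁ h3₂, ?_⟩
  intro v
  rcases D.cover v with ⟨x₀, rfl⟩ | ⟨y₀, rfl⟩
  · by_cases h0u : x₀ = D.u₁
    · subst h0u
      rw [D.hu₁]
      exact D.conn_del_a h₁tc h₂tc
    · by_cases h0v : x₀ = D.v₁
      · subst h0v
        rw [D.hv₁]
        exact D.swapAB.conn_del_a h₁tc h₂tc
      · exact D.conn_del_1 h₁tc h₂tc h3₂ x₀ h0u h0v
  · by_cases h0u : y₀ = D.u₂
    · subst h0u
      rw [D.hu₂]
      exact D.conn_del_a h₁tc h₂tc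
    · by_cases h0v : y₀ = D.v₂
      · subst h0v
        rw [D.hv₂]
        exact D.swapAB.conn_del_a h₁tc h₂tc
      · exact D.swapSides.conn_del_1 h₂tc h₁tc h3₁ y₀ h0u h0v

lemma e₁_mem : e₁ ∈ G₁.edgeSet := by
  rw [D.he₁]
  exact D.adj₁

lemma e₂_mem : e₂ ∈ G₂.edgeSet := by
  rw [D.he₂]
  exact D.adj₂

lemma cardW [Fintype W] : Nat.card W + 2 = Nat.card V₁ + Nat.card V₂ := by
  have hcov : Set.range D.φ₁ ∪ Set.range D.φ₂ = Set.univ := by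
    ext x
    simpa using D.cover x
  have h := Set.ncard_union_add_ncard_inter (Set.range D.φ₁) (Set.range D.φ₂)
  rw [hcov, D.inter, Set.ncard_univ, Set.ncard_pair D.hab] at h
  have h1 : (Set.range D.φ₁).ncard = Nat.card V₁ := by
    rw [← Nat.card_coe_set_eq, Nat.card_range_of_injective D.inj₁]
  have h2 : (Set.range D.φ₂).ncard = Nat.card V₂ := by
    rw [← Nat.card_coe_set_eq, Nat.card_range_of_injective D.inj₂]
  rw [h1, h2] at h
  omega

lemma edge_decomp : G.edgeSet =
    (Sym2.map D.φ₁ '' (G₁.edgeSet \ {e₁})) ∪ (Sym2.map D.φ₂ '' (G₂.edgeSet \ {e₂})) := by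
  ext e
  induction e using Sym2.ind with
  | _ x y =>
    constructor
    · intro he
      have hadj : G.Adj x y := he
      rcases (D.adj_iff x y).mp hadj with ⟨p, q, h', hne, hp, hq⟩ | ⟨p, q, h', hne, hp, hq⟩
      · exact Or.inl ⟨s(p, q), ⟨h', hne⟩, by rw [Sym2.map_pair_eq, hp, hq]⟩
      · exact Or.inr ⟨s(p, q), ⟨h', hne⟩, by rw [Sym2.map_pair_eq, hp, hq]⟩
    · rintro (⟨e', ⟨he', hne⟩, heq⟩ | ⟨e', ⟨he', hne⟩, heq⟩)
      · rw [← heq]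
        clear heq
        induction e' using Sym2.ind with
        | _ p q =>
          rw [Sym2.map_pair_eq]
          exact D.adj_of₁ he' (by simpa using hne)
      · rw [← heq]
        clear heq
        induction e' using Sym2.ind with
        | _ p q =>
          rw [Sym2.map_pair_eq]
          exact D.adj_of₂ he' (by simpa using hne)

lemma edge_disj :
    Disjoint (Sym2.map D.φ₁ '' (G₁.edgeSet \ {e₁})) (Sym2.map D.φ₂ '' (G₂.edgeSet \ {e₂})) := by
  rw [Set.disjoint_left]
  rintro e ⟨f, ⟨hf, hfne⟩, hfe⟩ ⟨g, ⟨hg, hgne⟩, hge⟩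
  induction f using Sym2.ind with
  | _ p q =>
    have hadj : G₁.Adj p q := hf
    rw [Sym2.map_pair_eq] at hfe
    have hpq : D.φ₁ p ∈ Set.range D.φ₂ ∧ D.φ₁ q ∈ Set.range D.φ₂ := by
      constructor
      · have hmem : D.φ₁ p ∈ Sym2.map D.φ₂ g := by
          rw [hge, ← hfe]
          exact Sym2.mem_mk_left _ _
        obtain ⟨x', _, hx'⟩ := Sym2.mem_map.mp hmem
        exact ⟨x', hx'⟩
      · have hmem : D.φ₁ q ∈ Sym2.map D.φ₂ g := by
          rw [hge, ← hfe]
          exact Sym2.mem_mk_right _ _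
        obtain ⟨x', _, hx'⟩ := Sym2.mem_map.mp hmem
        exact ⟨x', hx'⟩
    have hab1 : s(D.φ₁ p, D.φ₁ q) = s(a, b) := by
      rcases D.mem_ab ⟨p, rfl⟩ hpq.1 with h1 | h1 <;>
        rcases D.mem_ab ⟨q, rfl⟩ hpq.2 with h2 | h2
      · exact absurd (D.inj₁ (h1.trans h2.symm)) hadj.ne
      · rw [h1, h2]
      · rw [h1, h2]
        exact Sym2.eq_swap
      · exact absurd (D.inj₁ (h1.trans h2.symm)) hadj.ne
    have : Sym2.map D.φ₁ s(p, q) = Sym2.map D.φ₁ e₁ := by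
      rw [Sym2.map_pair_eq, hab1, D.hm₁']
    exact absurd (Sym2.map.injective D.inj₁ this) (by simpa using hfne)

lemma edge_count [Fintype V₁] [Fintype V₂] [Fintype W]
    (hc₁ : G₁.edgeSet.ncard = 2 * (Nat.card V₁ - 1))
    (hc₂ : G₂.edgeSet.ncard = 2 * (Nat.card V₂ - 1))
    (h3₁ : 3 ≤ Nat.card V₁) (h3₂ : 3 ≤ Nat.card V₂) :
    G.edgeSet.ncard = 2 * (Nat.card W - 1) := by
  have hd := D.edge_decomp
  have hcard : G.edgeSet.ncard =
      (Sym2.map D.φ₁ '' (G₁.edgeSet \ {e₁})).ncard +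
      (Sym2.map D.φ₂ '' (G₂.edgeSet \ {e₂})).ncard := by
    rw [hd]
    exact Set.ncard_union_eq D.edge_disj (Set.toFinite _) (Set.toFinite _)
  rw [Set.ncard_image_of_injective _ (Sym2.map.injective D.inj₁),
    Set.ncard_image_of_injective _ (Sym2.map.injective D.inj₂),
    Set.ncard_diff_singleton_of_mem D.e₁_mem,
    Set.ncard_diff_singleton_of_mem D.e₂_mem, hc₁, hc₂] at hcard
  have hW := D.cardW
  rw [hcard]
  omega

lemma mem_of_cross {S : Set W} (hSgf : IsGoodFlat G S) {x y : W} (hx : x ∈ S)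
    (hx1 : x ∉ Set.range D.φ₁) (hy : y ∈ S) (hy2 : y ∉ Set.range D.φ₂) : a ∈ S := by
  by_contra haS
  have hxR2 : x ∈ Set.range D.φ₂ := (D.cover x).resolve_left hx1
  have hyR1 : y ∈ Set.range D.φ₁ := (D.cover y).resolve_right hy2
  by_cases hbS : b ∈ S
  · have hcon := hSgf.1.2 ⟨b, hbS⟩
    have hxb : x ≠ b := by rintro rfl; exact hx1 D.bR₁
    have hyb : y ≠ b := by rintro rfl; exact hy2 D.bR₂
    have hyv : (⟨y, hy⟩ : ↥S) ∈ {u : ↥S | u ≠ ⟨b, hbS⟩} := fun h => hyb (Subtype.ext_iff.mp h)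
    have hxv : (⟨x, hx⟩ : ↥S) ∈ {u : ↥S | u ≠ ⟨b, hbS⟩} := fun h => hxb (Subtype.ext_iff.mp h)
    have hinv := reachable_invariant
      (X := (G.induce S).induce {u : ↥S | u ≠ ⟨b, hbS⟩})
      (fun t => (((t : ↥S) : W)) ∈ Set.range D.φ₁) ?_
      (hcon.preconnected ⟨⟨y, hy⟩, hyv⟩ ⟨⟨x, hx⟩, hxv⟩)
    · exact hx1 (hinv.mp hyR1)
    · intro p q hpq
      have hadj : G.Adj (((p : ↥S)) : W) (((q : ↥S)) : W) := hpq
      rcases D.adj_side hadj with ⟨h1, h2⟩ | ⟨h1, h2⟩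
      · exact ⟨fun _ => h2, fun _ => h1⟩
      · constructor
        · intro hp1
          exfalso
          rcases D.mem_ab hp1 h1 with h | h
          · exact haS (h ▸ (p : ↥S).2)
          · exact p.2 (Subtype.ext h)
        · intro hq1
          exfalso
          rcases D.mem_ab hq1 h2 with h | h
          · exact haS (h ▸ (q : ↥S).2)
          · exact q.2 (Subtype.ext h)
  · have hcon := hSgf.1.1
    have hinv := reachable_invariant (X := G.induce S)
      (fun t => ((t : W)) ∈ Set.range D.φ₁) ?_
      (hcon.preconnected ⟨y, hy⟩ ⟨x, hx⟩)
    · exact hx1 (hinv.mp hyR1)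
    · intro p q hpq
      have hadj : G.Adj ((p : W)) ((q : W)) := hpq
      rcases D.adj_side hadj with ⟨h1, h2⟩ | ⟨h1, h2⟩
      · exact ⟨fun _ => h2, fun _ => h1⟩
      · constructor
        · intro hp1
          exfalso
          rcases D.mem_ab hp1 h1 with h | h
          · exact haS (h ▸ p.2)
          · exact hbS (h ▸ p.2)
        · intro hq1
          exfalso
          rcases D.mem_ab hq1 h2 with h | h
          · exact haS (h ▸ q.2)
          · exact hbS (h ▸ q.2)

lemma nosplit {S : Set W} (hSgf : IsGoodFlat G S) (haS : a ∈ S) (hbS : b ∈ S)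
    {p q : W} (hp1 : p ∈ Set.range D.φ₁) (hpS : p ∉ S)
    (hq1 : q ∉ Set.range D.φ₁) (hqS : q ∉ S) : False := by
  have hconS : (G.induce S).Connected := hSgf.1.1
  have hdel := hSgf.2.2 (cmp G S a)
  have hpne : cmp G S p ≠ cmp G S a := by
    intro h
    rcases cm_dichot h with rfl | ⟨h1, _⟩
    · exact hpS haS
    · exact hpS h1
  have hqne : cmp G S q ≠ cmp G S a := by
    intro h
    rcases cm_dichot h with rfl | ⟨h1, _⟩
    · exact hqS haS
    · exact hqS h1
  have hinv := reachable_invariant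
    (X := (contractEdges G (edgesIn G S)).induce {c | c ≠ cmp G S a})
    (fun t => ∃ w, w ∉ S ∧ w ∈ Set.range D.φ₁ ∧ cmp G S w = (t : (fromEdgeSet (edgesIn G S)).ConnectedComponent)) ?_
    (hdel.preconnected ⟨cmp G S p, hpne⟩ ⟨cmp G S q, hqne⟩)
  · obtain ⟨w, hwS, hwR, hww⟩ := hinv.mp ⟨p, hpS, hp1, rfl⟩
    have : w = q := cm_single hwS hww
    exact hq1 (this ▸ hwR)
  · intro c d hcd
    obtain ⟨u, v, huv, hu, hv⟩ := contract_adj_elim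
      (hcd : (contractEdges G (edgesIn G S)).Adj (c : _) (d : _))
    have huS : u ∉ S := by
      intro huS
      exact c.2 (hu.symm.trans (cm_blob hconS huS haS))
    have hvS : v ∉ S := by
      intro hvS
      exact d.2 (hv.symm.trans (cm_blob hconS hvS haS))
    rcases D.adj_side huv with ⟨h1, h2⟩ | ⟨h1, h2⟩
    · exact ⟨fun _ => ⟨v, hvS, h2, hv⟩, fun _ => ⟨u, huS, h1, hu⟩⟩
    · constructor
      · rintro ⟨w, hwS, hwR, hww⟩
        exfalso
        have : w = u := cm_single hwS (hww.trans hu.symm)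
        subst this
        rcases D.mem_ab hwR h1 with rfl | rfl
        · exact hwS haS
        · exact hwS hbS
      · rintro ⟨w, hwS, hwR, hww⟩
        exfalso
        have : w = v := cm_single hwS (hww.trans hv.symm)
        subst this
        rcases D.mem_ab hwR h2 with rfl | rfl
        · exact hwS haS
        · exact hwS hbS

lemma sides {S : Set W} (hSgf : IsGoodFlat G S) :
    S ⊆ Set.range D.φ₁ ∨ S ⊆ Set.range D.φ₂ ∨
    (a ∈ S ∧ b ∈ S ∧ (Set.range D.φ₁ ⊆ S ∨ Set.range D.φ₂ ⊆ S)) := by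
  by_cases h1 : S ⊆ Set.range D.φ₁
  · exact Or.inl h1
  by_cases h2 : S ⊆ Set.range D.φ₂
  · exact Or.inr (Or.inl h2)
  obtain ⟨x, hx, hx1⟩ := Set.not_subset.mp h1
  obtain ⟨y, hy, hy2⟩ := Set.not_subset.mp h2
  have haS : a ∈ S := D.mem_of_cross hSgf hx hx1 hy hy2
  have hbS : b ∈ S := D.swapAB.mem_of_cross hSgf hx hx1 hy hy2
  refine Or.inr (Or.inr ⟨haS, hbS, ?_⟩)
  by_contra hcon
  push_neg at hcon
  obtain ⟨p, hp1, hpS⟩ := Set.not_subset.mp hcon.1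
  obtain ⟨q, hq2, hqS⟩ := Set.not_subset.mp hcon.2
  have hq1 : q ∉ Set.range D.φ₁ := by
    intro hq1
    rcases D.mem_ab hq1 hq2 with rfl | rfl
    · exact hqS haS
    · exact hqS hbS
  exact D.nosplit hSgf haS hbS hp1 hpS hq1 hqS

lemma edgesIn_range : edgesIn G (Set.range D.φ₁) = Sym2.map D.φ₁ '' (G₁.edgeSet \ {e₁}) := by
  ext e
  induction e using Sym2.ind with
  | _ x y =>
    constructor
    · intro he
      obtain ⟨hadj, hx, hy⟩ := mem_edgesIn.mp he
      obtain ⟨p, q, h', hne, hp, hq⟩ := D.adj_pull₁ hadj hx hy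
      exact ⟨s(p, q), ⟨h', by simpa using hne⟩, by rw [Sym2.map_pair_eq, hp, hq]⟩
    · rintro ⟨e', ⟨he', hne⟩, heq⟩
      rw [← heq]
      clear heq
      induction e' using Sym2.ind with
      | _ p q =>
        rw [Sym2.map_pair_eq]
        exact mem_edgesIn.mpr ⟨D.adj_of₁ he' (by simpa using hne), ⟨p, rfl⟩, ⟨q, rfl⟩⟩

lemma count_range [Fintype V₁] [Fintype W] (hc₁ : G₁.edgeSet.ncard = 2 * (Nat.card V₁ - 1))
    (h3₁ : 3 ≤ Nat.card V₁) :
    (edgesIn G (Set.range D.φ₁)).ncard = 2 * (Set.range D.φ₁).ncard - 3 := by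
  rw [D.edgesIn_range, Set.ncard_image_of_injective _ (Sym2.map.injective D.inj₁),
    Set.ncard_diff_singleton_of_mem D.e₁_mem, hc₁]
  have h1 : (Set.range D.φ₁).ncard = Nat.card V₁ := by
    rw [← Nat.card_coe_set_eq, Nat.card_range_of_injective D.inj₁]
  rw [h1]
  omega

lemma induce_conn_sub {S : Set W} (hsub : S ⊆ Set.range D.φ₁)
    (hcon : (G.induce S).Connected) : (G₁.induce (D.φ₁ ⁻¹' S)).Connected := by
  have hmem : ∀ w : ↥S, D.ρ D.u₁ ((w : W)) ∈ D.φ₁ ⁻¹' S := by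
    intro w
    show D.φ₁ (D.ρ D.u₁ ((w : W))) ∈ S
    rw [D.ρ_spec (hsub w.2)]
    exact w.2
  refine connected_map (X := G.induce S) (Y := G₁.induce (D.φ₁ ⁻¹' S))
    (fun w => ⟨D.ρ D.u₁ ((w : W)), hmem w⟩) ?_ ?_ hcon
  · rintro ⟨x, hx⟩
    exact ⟨⟨D.φ₁ x, hx⟩, Subtype.ext (D.ρ_phi x)⟩
  · intro p q hpq
    have hadj : G.Adj ((p : W)) ((q : W)) := hpq
    obtain ⟨x, y, h', hne, hx, hy⟩ := D.adj_pull₁ hadj (hsub p.2) (hsub q.2)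
    refine Adj.reachable ?_
    show G₁.Adj (D.ρ D.u₁ ((p : W))) (D.ρ D.u₁ ((q : W)))
    rw [show D.ρ D.u₁ ((p : W)) = x by rw [← hx, D.ρ_phi],
      show D.ρ D.u₁ ((q : W)) = y by rw [← hy, D.ρ_phi]]
    exact h'

lemma induce_del_sub {S : Set W} (hsub : S ⊆ Set.range D.φ₁)
    (h2c : IsTwoConnected (G.induce S)) (v : ↥(D.φ₁ ⁻¹' S)) :
    ((G₁.induce (D.φ₁ ⁻¹' S)).induce {u | u ≠ v}).Connected := by
  have hvS : D.φ₁ ((v : V₁)) ∈ S := v.2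
  have hcon := h2c.2 ⟨D.φ₁ ((v : V₁)), hvS⟩
  have hmem : ∀ w : {u : ↥S // u ∈ {u : ↥S | u ≠ ⟨D.φ₁ ((v : V₁)), hvS⟩}},
      D.ρ D.u₁ (((w : ↥S) : W)) ∈ D.φ₁ ⁻¹' S := by
    intro w
    show D.φ₁ _ ∈ S
    rw [D.ρ_spec (hsub (w : ↥S).2)]
    exact (w : ↥S).2
  have hnev : ∀ w : {u : ↥S // u ∈ {u : ↥S | u ≠ ⟨D.φ₁ ((v : V₁)), hvS⟩}},
      (⟨D.ρ D.u₁ (((w : ↥S) : W)), hmem w⟩ : ↥(D.φ₁ ⁻¹' S)) ∈ {u : ↥(D.φ₁ ⁻¹' S) | u ≠ v} := by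
    intro w h
    apply w.2
    apply Subtype.ext
    show (((w : ↥S)) : W) = D.φ₁ ((v : V₁))
    have h' : D.ρ D.u₁ (((w : ↥S)) : W) = (v : V₁) := Subtype.ext_iff.mp h
    rw [← D.ρ_spec (hsub (w : ↥S).2), h']
  refine connected_map (X := (G.induce S).induce {u : ↥S | u ≠ ⟨D.φ₁ ((v : V₁)), hvS⟩})
    (Y := (G₁.induce (D.φ₁ ⁻¹' S)).induce {u | u ≠ v})
    (fun w => ⟨⟨D.ρ D.u₁ (((w : ↥S)) : W), hmem w⟩, hnev w⟩) ?_ ?_ hcon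
  · rintro ⟨⟨x, hx⟩, hxv⟩
    have hx' : D.φ₁ x ∈ S := hx
    have hxv' : (⟨D.φ₁ x, hx'⟩ : ↥S) ∈ {u : ↥S | u ≠ ⟨D.φ₁ ((v : V₁)), hvS⟩} := by
      intro h
      apply hxv
      apply Subtype.ext
      exact D.inj₁ (Subtype.ext_iff.mp h)
    refine ⟨⟨⟨D.φ₁ x, hx'⟩, hxv'⟩, ?_⟩
    apply Subtype.ext
    apply Subtype.ext
    exact D.ρ_phi x
  · intro p q hpq
    have hadj : G.Adj ((((p : ↥S)) : W)) ((((q : ↥S)) : W)) := hpq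
    obtain ⟨x, y, h', hne', hx, hy⟩ := D.adj_pull₁ hadj (hsub (p : ↥S).2) (hsub (q : ↥S).2)
    refine Adj.reachable ?_
    show G₁.Adj (D.ρ D.u₁ _) (D.ρ D.u₁ _)
    rw [show D.ρ D.u₁ ((((p : ↥S)) : W)) = x by rw [← hx, D.ρ_phi],
      show D.ρ D.u₁ ((((q : ↥S)) : W)) = y by rw [← hy, D.ρ_phi]]
    exact h'

lemma two_conn_sub {S : Set W} (hsub : S ⊆ Set.range D.φ₁)
    (h2c : IsTwoConnected (G.induce S)) : IsTwoConnected (G₁.induce (D.φ₁ ⁻¹' S)) :=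
  ⟨D.induce_conn_sub hsub h2c.1, fun v => D.induce_del_sub hsub h2c v⟩

lemma ρ_val₂ {t : V₁} (ht : t = D.u₁ ∨ t = D.v₁) {w : W} (hw : w ∈ Set.range D.φ₂) :
    D.ρ t w = D.u₁ ∨ D.ρ t w = D.v₁ := by
  by_cases hw1 : w ∈ Set.range D.φ₁
  · rcases D.mem_ab hw1 hw with rfl | rfl
    · exact Or.inl D.ρ_a
    · exact Or.inr D.ρ_b
  · rw [D.ρ_out hw1]
    exact ht

lemma induce_conn_super {S : Set W} (haS : a ∈ S) (hbS : b ∈ S)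
    (hcon : (G.induce S).Connected) : (G₁.induce (D.φ₁ ⁻¹' S)).Connected := by
  have hu₁S : D.u₁ ∈ D.φ₁ ⁻¹' S := by show D.φ₁ D.u₁ ∈ S; rw [D.hu₁]; exact haS
  have hmem : ∀ w : ↥S, D.ρ D.u₁ ((w : W)) ∈ D.φ₁ ⁻¹' S := by
    intro w
    by_cases hw1 : (w : W) ∈ Set.range D.φ₁
    · show D.φ₁ _ ∈ S
      rw [D.ρ_spec hw1]
      exact w.2
    · rw [D.ρ_out hw1]
      exact hu₁S
  refine connected_map (X := G.induce S) (Y := G₁.induce (D.φ₁ ⁻¹' S))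
    (fun w => ⟨D.ρ D.u₁ ((w : W)), hmem w⟩) ?_ ?_ hcon
  · rintro ⟨x, hx⟩
    exact ⟨⟨D.φ₁ x, hx⟩, Subtype.ext (D.ρ_phi x)⟩
  · intro p q hpq
    have hadj : G.Adj ((p : W)) ((q : W)) := hpq
    by_cases hcase : (p : W) ∈ Set.range D.φ₁ ∧ (q : W) ∈ Set.range D.φ₁
    · obtain ⟨x, y, h', hne, hx, hy⟩ := D.adj_pull₁ hadj hcase.1 hcase.2
      refine Adj.reachable ?_
      show G₁.Adj (D.ρ D.u₁ ((p : W))) (D.ρ D.u₁ ((q : W)))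
      rw [show D.ρ D.u₁ ((p : W)) = x by rw [← hx, D.ρ_phi],
        show D.ρ D.u₁ ((q : W)) = y by rw [← hy, D.ρ_phi]]
      exact h'
    · have h2 : (p : W) ∈ Set.range D.φ₂ ∧ (q : W) ∈ Set.range D.φ₂ := by
        rcases D.adj_side hadj with h' | h'
        · exact absurd h' hcase
        · exact h'
      have hvp := D.ρ_val₂ (Or.inl rfl) h2.1
      have hvq := D.ρ_val₂ (Or.inl rfl) h2.2
      have hreach : ∀ (c d : ↥(D.φ₁ ⁻¹' S)),
          ((c : V₁) = D.u₁ ∨ (c : V₁) = D.v₁) → ((d : V₁) = D.u₁ ∨ (d : V₁) = D.v₁) →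
          (G₁.induce (D.φ₁ ⁻¹' S)).Reachable c d := by
        intro c d hc hd
        by_cases hcd : (c : V₁) = (d : V₁)
        · rw [Subtype.ext hcd]
        · refine Adj.reachable ?_
          show G₁.Adj (c : V₁) (d : V₁)
          rcases hc with hc | hc <;> rcases hd with hd | hd
          · exact absurd (hc.trans hd.symm) hcd
          · rw [hc, hd]; exact D.adj₁
          · rw [hc, hd]; exact D.adj₁.symm
          · exact absurd (hc.trans hd.symm) hcd
      exact hreach _ _ hvp hvq

lemma induce_del_super {S : Set W} (haS : a ∈ S) (hbS : b ∈ S)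
    (h2c : IsTwoConnected (G.induce S)) (v : ↥(D.φ₁ ⁻¹' S)) :
    ((G₁.induce (D.φ₁ ⁻¹' S)).induce {u | u ≠ v}).Connected := by
  have hu₁S : D.u₁ ∈ D.φ₁ ⁻¹' S := by show D.φ₁ D.u₁ ∈ S; rw [D.hu₁]; exact haS
  have hv₁S : D.v₁ ∈ D.φ₁ ⁻¹' S := by show D.φ₁ D.v₁ ∈ S; rw [D.hv₁]; exact hbS
  set t : V₁ := if (v : V₁) = D.u₁ then D.v₁ else D.u₁ with htdef
  have htuv : t = D.u₁ ∨ t = D.v₁ := by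
    rw [htdef]
    split
    · exact Or.inr rfl
    · exact Or.inl rfl
  have htS : t ∈ D.φ₁ ⁻¹' S := by
    rcases htuv with h | h <;> rw [h]
    · exact hu₁S
    · exact hv₁S
  have htv : t ≠ (v : V₁) := by
    rw [htdef]
    split
    · rename_i h
      intro hEq
      exact D.une (h ▸ hEq).symm
    · rename_i h
      exact fun hEq => h hEq.symm
  have hvS : D.φ₁ ((v : V₁)) ∈ S := v.2
  have hcon := h2c.2 ⟨D.φ₁ ((v : V₁)), hvS⟩
  have hmem : ∀ w : {u : ↥S // u ∈ {u : ↥S | u ≠ ⟨D.φ₁ ((v : V₁)), hvS⟩}},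
      D.ρ t (((w : ↥S)) : W) ∈ D.φ₁ ⁻¹' S := by
    intro w
    by_cases hw1 : (((w : ↥S)) : W) ∈ Set.range D.φ₁
    · show D.φ₁ _ ∈ S
      rw [D.ρ_spec hw1]
      exact (w : ↥S).2
    · rw [D.ρ_out hw1]
      exact htS
  have hnev : ∀ w : {u : ↥S // u ∈ {u : ↥S | u ≠ ⟨D.φ₁ ((v : V₁)), hvS⟩}},
      (⟨D.ρ t (((w : ↥S)) : W), hmem w⟩ : ↥(D.φ₁ ⁻¹' S)) ∈ {u : ↥(D.φ₁ ⁻¹' S) | u ≠ v} := by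
    intro w h
    have h' : D.ρ t (((w : ↥S)) : W) = (v : V₁) := Subtype.ext_iff.mp h
    by_cases hw1 : (((w : ↥S)) : W) ∈ Set.range D.φ₁
    · apply w.2
      apply Subtype.ext
      show (((w : ↥S)) : W) = D.φ₁ ((v : V₁))
      rw [← D.ρ_spec (t := t) hw1, h']
    · rw [D.ρ_out hw1] at h'
      exact htv h'
  refine connected_map (X := (G.induce S).induce {u : ↥S | u ≠ ⟨D.φ₁ ((v : V₁)), hvS⟩})
    (Y := (G₁.induce (D.φ₁ ⁻¹' S)).induce {u | u ≠ v})
    (fun w => ⟨⟨D.ρ t (((w : ↥S)) : W), hmem w⟩, hnev w⟩) ?_ ?_ hcon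
  · rintro ⟨⟨x, hx⟩, hxv⟩
    have hx' : D.φ₁ x ∈ S := hx
    have hxv' : (⟨D.φ₁ x, hx'⟩ : ↥S) ∈ {u : ↥S | u ≠ ⟨D.φ₁ ((v : V₁)), hvS⟩} :=
      fun h => hxv (Subtype.ext (D.inj₁ (Subtype.ext_iff.mp h)))
    refine ⟨⟨⟨D.φ₁ x, hx'⟩, hxv'⟩, ?_⟩
    apply Subtype.ext
    apply Subtype.ext
    exact D.ρ_phi x
  · intro p q hpq
    have hadj : G.Adj ((((p : ↥S)) : W)) ((((q : ↥S)) : W)) := hpq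
    by_cases hcase : (((p : ↥S)) : W) ∈ Set.range D.φ₁ ∧ (((q : ↥S)) : W) ∈ Set.range D.φ₁
    · obtain ⟨x, y, h', hne', hx, hy⟩ := D.adj_pull₁ hadj hcase.1 hcase.2
      refine Adj.reachable ?_
      show G₁.Adj (D.ρ t ((((p : ↥S)) : W))) (D.ρ t ((((q : ↥S)) : W)))
      rw [show D.ρ t ((((p : ↥S)) : W)) = x by rw [← hx, D.ρ_phi],
        show D.ρ t ((((q : ↥S)) : W)) = y by rw [← hy, D.ρ_phi]]
      exact h'
    · have h2 : (((p : ↥S)) : W) ∈ Set.range D.φ₂ ∧ (((q : ↥S)) : W) ∈ Set.range D.φ₂ := by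
        rcases D.adj_side hadj with h' | h'
        · exact absurd h' hcase
        · exact h'
      have hvp := D.ρ_val₂ htuv h2.1
      have hvq := D.ρ_val₂ htuv h2.2
      have hreach : ∀ (c d : {u : ↥(D.φ₁ ⁻¹' S) // u ∈ {u : ↥(D.φ₁ ⁻¹' S) | u ≠ v}}),
          (((c : ↥(D.φ₁ ⁻¹' S)) : V₁) = D.u₁ ∨ ((c : ↥(D.φ₁ ⁻¹' S)) : V₁) = D.v₁) →
          (((d : ↥(D.φ₁ ⁻¹' S)) : V₁) = D.u₁ ∨ ((d : ↥(D.φ₁ ⁻¹' S)) : V₁) = D.v₁) →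
          ((G₁.induce (D.φ₁ ⁻¹' S)).induce {u | u ≠ v}).Reachable c d := by
        intro c d hc hd
        by_cases hcd : ((c : ↥(D.φ₁ ⁻¹' S)) : V₁) = ((d : ↥(D.φ₁ ⁻¹' S)) : V₁)
        · rw [Subtype.ext (Subtype.ext hcd)]
        · refine Adj.reachable ?_
          show G₁.Adj ((c : ↥(D.φ₁ ⁻¹' S)) : V₁) ((d : ↥(D.φ₁ ⁻¹' S)) : V₁)
          rcases hc with hc | hc <;> rcases hd with hd | hd
          · exact absurd (hc.trans hd.symm) hcd
          · rw [hc, hd]; exact D.adj₁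
          · rw [hc, hd]; exact D.adj₁.symm
          · exact absurd (hc.trans hd.symm) hcd
      exact hreach _ _ hvp hvq

lemma two_conn_super {S : Set W} (haS : a ∈ S) (hbS : b ∈ S)
    (h2c : IsTwoConnected (G.induce S)) : IsTwoConnected (G₁.induce (D.φ₁ ⁻¹' S)) :=
  ⟨D.induce_conn_super haS hbS h2c.1, fun v => D.induce_del_super haS hbS h2c v⟩

end CollData

lemma reach_eq {α : Type*} {β : Sort*} {X : SimpleGraph α} (f : α → β)
    (h : ∀ p q, X.Adj p q → f p = f q) {x y : α} (hr : X.Reachable x y) : f x = f y := by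
  obtain ⟨w⟩ := hr
  induction w with
  | nil => rfl
  | cons h' _ ih => exact (h _ _ h').trans ih

namespace CollData

variable (D : CollData G₁ G₂ e₁ e₂ G a b)
include D

lemma contract_transfer_one {S : Set W} (hSgf : IsGoodFlat G S)
    (hS₁c : (G₁.induce (D.φ₁ ⁻¹' S)).Connected)
    (x₀ : V₁) (t : V₁) (ht : t = D.u₁ ∨ t = D.v₁)
    (hwd2 : ∀ w w' : W, G.Adj w w' → w ∈ S → w' ∈ S →
      (w ∉ Set.range D.φ₁ ∨ w' ∉ Set.range D.φ₁) →
      cmp G₁ (D.φ₁ ⁻¹' S) (D.ρ t w) = cmp G₁ (D.φ₁ ⁻¹' S) (D.ρ t w'))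
    (hvert2 : ∀ w : W, w ∉ Set.range D.φ₁ → cmp G S w ≠ cmp G S (D.φ₁ x₀) →
      cmp G₁ (D.φ₁ ⁻¹' S) t ≠ cmp G₁ (D.φ₁ ⁻¹' S) x₀) :
    ((contractEdges G₁ (edgesIn G₁ (D.φ₁ ⁻¹' S))).induce
      {d | d ≠ cmp G₁ (D.φ₁ ⁻¹' S) x₀}).Connected := by
  set S₁ := D.φ₁ ⁻¹' S with hS₁def
  have hwd : ∀ u v : W, (fromEdgeSet (edgesIn G S)).Adj u v →
      cmp G₁ S₁ (D.ρ t u) = cmp G₁ S₁ (D.ρ t v) := by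
    intro u v huv
    obtain ⟨hadj, huS, hvS⟩ := cm_adj huv
    by_cases hcase : u ∈ Set.range D.φ₁ ∧ v ∈ Set.range D.φ₁
    · obtain ⟨x, y, h', hne, hx, hy⟩ := D.adj_pull₁ hadj hcase.1 hcase.2
      have ex : D.ρ t u = x := by rw [← hx, D.ρ_phi]
      have ey : D.ρ t v = y := by rw [← hy, D.ρ_phi]
      rw [ex, ey]
      refine ConnectedComponent.sound (Adj.reachable ?_)
      rw [fromEdgeSet_adj]
      refine ⟨mem_edgesIn.mpr ⟨h', ?_, ?_⟩, h'.ne⟩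
      · show D.φ₁ x ∈ S
        rw [hx]
        exact huS
      · show D.φ₁ y ∈ S
        rw [hy]
        exact hvS
    · have hor : u ∉ Set.range D.φ₁ ∨ v ∉ Set.range D.φ₁ := by
        by_contra hcon
        push_neg at hcon
        exact hcase ⟨hcon.1, hcon.2⟩
      exact hwd2 u v hadj huS hvS hor
  let ψ : (fromEdgeSet (edgesIn G S)).ConnectedComponent →
      (fromEdgeSet (edgesIn G₁ S₁)).ConnectedComponent :=
    ConnectedComponent.lift (fun w => cmp G₁ S₁ (D.ρ t w))
      (fun v' w' p _ => reach_eq _ hwd ⟨p⟩)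
  have hψ : ∀ w : W, ψ (cmp G S w) = cmp G₁ S₁ (D.ρ t w) := fun w => rfl
  have hvert : ∀ w : W, cmp G S w ≠ cmp G S (D.φ₁ x₀) →
      cmp G₁ S₁ (D.ρ t w) ≠ cmp G₁ S₁ x₀ := by
    intro w hw hEq
    by_cases hw1 : w ∈ Set.range D.φ₁
    · rcases cm_dichot hEq with h | ⟨h1, h2⟩
      · apply hw
        rw [← D.ρ_spec (t := t) hw1, h]
      · apply hw
        have hwS : w ∈ S := by
          rw [← D.ρ_spec (t := t) hw1]
          exact h1
        exact cm_blob hSgf.1.1 hwS h2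
    · rw [D.ρ_out hw1] at hEq
      exact hvert2 w hw1 hw hEq
  have hvertc : ∀ c : (fromEdgeSet (edgesIn G S)).ConnectedComponent,
      c ≠ cmp G S (D.φ₁ x₀) → ψ c ≠ cmp G₁ S₁ x₀ := by
    intro c
    induction c using ConnectedComponent.ind with
    | _ w => exact hvert w
  have hX := hSgf.2.2 (cmp G S (D.φ₁ x₀))
  set F : ↥{c | c ≠ cmp G S (D.φ₁ x₀)} → ↥{d | d ≠ cmp G₁ S₁ x₀} :=
    fun c => ⟨ψ (c : (fromEdgeSet (edgesIn G S)).ConnectedComponent), hvertc _ c.2⟩ with hFdef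
  refine connected_map
    (X := (contractEdges G (edgesIn G S)).induce {c | c ≠ cmp G S (D.φ₁ x₀)})
    (Y := (contractEdges G₁ (edgesIn G₁ S₁)).induce {d | d ≠ cmp G₁ S₁ x₀})
    F ?_ ?_ hX
  · rintro ⟨d, hd⟩
    obtain ⟨x, hx⟩ := d.exists_rep
    have hx' : cmp G₁ S₁ x = d := hx
    have hd' : cmp G₁ S₁ x ≠ cmp G₁ S₁ x₀ := by
      rw [hx']
      exact hd
    have hne : cmp G S (D.φ₁ x) ≠ cmp G S (D.φ₁ x₀) := by
      intro hEq
      rcases cm_dichot hEq with h | ⟨h1, h2⟩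
      · exact hd' (by rw [D.inj₁ h])
      · exact hd' (cm_blob hS₁c h1 h2)
    refine ⟨⟨cmp G S (D.φ₁ x), hne⟩, ?_⟩
    apply Subtype.ext
    show ψ (cmp G S (D.φ₁ x)) = d
    rw [hψ, D.ρ_phi]
    exact hx'
  · intro p q hpq
    obtain ⟨cp, hcp⟩ := p
    obtain ⟨cq, hcq⟩ := q
    obtain ⟨u, v, huv, hu, hv⟩ := contract_adj_elim
      (hpq : (contractEdges G (edgesIn G S)).Adj cp cq)
    have epu : ψ cp = cmp G₁ S₁ (D.ρ t u) := (congrArg ψ hu).symm.trans (hψ u)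
    have eqv : ψ cq = cmp G₁ S₁ (D.ρ t v) := (congrArg ψ hv).symm.trans (hψ v)
    by_cases heq : ψ cp = ψ cq
    · have hFF : F ⟨cp, hcp⟩ = F ⟨cq, hcq⟩ := Subtype.ext heq
      rw [hFF]
    · refine Adj.reachable ?_
      show (contractEdges G₁ (edgesIn G₁ S₁)).Adj (ψ cp) (ψ cq)
      by_cases hcase : u ∈ Set.range D.φ₁ ∧ v ∈ Set.range D.φ₁
      · obtain ⟨x, y, h', hne', hx, hy⟩ := D.adj_pull₁ huv hcase.1 hcase.2
        have ex : D.ρ t u = x := by rw [← hx, D.ρ_phi]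
        have ey : D.ρ t v = y := by rw [← hy, D.ρ_phi]
        have hnecc : cmp G₁ S₁ x ≠ cmp G₁ S₁ y := by
          rw [← ex, ← ey, ← epu, ← eqv]
          exact heq
        rw [epu, eqv, ex, ey]
        exact contract_adj_mk h' hnecc
      · have h2 : u ∈ Set.range D.φ₂ ∧ v ∈ Set.range D.φ₂ := (D.adj_side huv).resolve_left hcase
        have hvu := D.ρ_val₂ ht h2.1
        have hvv := D.ρ_val₂ ht h2.2
        have hxy : G₁.Adj (D.ρ t u) (D.ρ t v) := by
          have hne'' : D.ρ t u ≠ D.ρ t v := by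
            intro h
            exact heq (by rw [epu, eqv, h])
          rcases hvu with h1 | h1 <;> rcases hvv with h2' | h2'
          · exact absurd (h1.trans h2'.symm) hne''
          · rw [h1, h2']; exact D.adj₁
          · rw [h1, h2']; exact D.adj₁.symm
          · exact absurd (h1.trans h2'.symm) hne''
        have hnecc : cmp G₁ S₁ (D.ρ t u) ≠ cmp G₁ S₁ (D.ρ t v) := by
          rw [← epu, ← eqv]
          exact heq
        rw [epu, eqv]
        exact contract_adj_mk hxy hnecc

end CollData

lemma contract_connected {V : Type*} {X : SimpleGraph V} (hX : X.Connected)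
    (F : Set (Sym2 V)) : (contractEdges X F).Connected := by
  refine connected_map (X := X) (Y := contractEdges X F)
    (fun w => (fromEdgeSet F).connectedComponentMk w) ?_ ?_ hX
  · intro c
    obtain ⟨w, hw⟩ := c.exists_rep
    exact ⟨w, hw⟩
  · intro p q hpq
    by_cases h : (fromEdgeSet F).connectedComponentMk p = (fromEdgeSet F).connectedComponentMk q
    · beta_reduce
      rw [h]
    · exact Adj.reachable (contract_adj_mk hpq h)

lemma good_flat_ne_univ {V : Type*} {X : SimpleGraph V} {S : Set V}
    (hSgf : IsGoodFlat X S) : S ≠ Set.univ := by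
  rintro rfl
  have hconS : (X.induce (Set.univ : Set V)).Connected := hSgf.1.1
  obtain ⟨w₀'⟩ := hconS.nonempty
  have hdel := hSgf.2.2 (cmp X Set.univ (w₀' : V))
  obtain ⟨⟨c, hc⟩⟩ := hdel.nonempty
  obtain ⟨w, hw⟩ := c.exists_rep
  apply hc
  rw [← hw]
  exact cm_blob hconS (Set.mem_univ _) (Set.mem_univ _)

namespace CollData

variable (D : CollData G₁ G₂ e₁ e₂ G a b)
include D

lemma contract_two_conn_sub {S : Set W} (h₁tc : IsTwoConnected G₁) (hSgf : IsGoodFlat G S)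
    (hsub : S ⊆ Set.range D.φ₁) (hnab : ¬ (a ∈ S ∧ b ∈ S)) :
    IsTwoConnected (contractEdges G₁ (edgesIn G₁ (D.φ₁ ⁻¹' S))) := by
  have hS₁c := D.induce_conn_sub hsub hSgf.1.1
  refine ⟨contract_connected h₁tc.1 _, ?_⟩
  intro c
  induction c using ConnectedComponent.ind with
  | _ x₀ =>
    have habS : ¬ (D.u₁ ∈ D.φ₁ ⁻¹' S ∧ D.v₁ ∈ D.φ₁ ⁻¹' S) := by
      rintro ⟨h1, h2⟩
      refine hnab ⟨?_, ?_⟩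
      · rw [← D.hu₁]; exact h1
      · rw [← D.hv₁]; exact h2
    by_cases hcc : cmp G₁ (D.φ₁ ⁻¹' S) D.u₁ = cmp G₁ (D.φ₁ ⁻¹' S) x₀
    · refine D.contract_transfer_one hSgf hS₁c x₀ D.v₁ (Or.inr rfl) ?_ ?_
      · intro w w' hadj hwS hw'S hor
        rcases hor with h | h
        · exact absurd (hsub hwS) h
        · exact absurd (hsub hw'S) h
      · intro w hw1 hw hEq
        have h2 : cmp G₁ (D.φ₁ ⁻¹' S) D.u₁ = cmp G₁ (D.φ₁ ⁻¹' S) D.v₁ := hcc.trans hEq.symm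
        rcases cm_dichot h2 with h | ⟨hh1, hh2⟩
        · exact D.une h
        · exact habS ⟨hh1, hh2⟩
    · refine D.contract_transfer_one hSgf hS₁c x₀ D.u₁ (Or.inl rfl) ?_ ?_
      · intro w w' hadj hwS hw'S hor
        rcases hor with h | h
        · exact absurd (hsub hwS) h
        · exact absurd (hsub hw'S) h
      · intro w hw1 hw hEq
        exact hcc hEq

lemma contract_two_conn_super {S : Set W} (h₁tc : IsTwoConnected G₁) (hSgf : IsGoodFlat G S)
    (hsup : Set.range D.φ₂ ⊆ S) (haS : a ∈ S) (hbS : b ∈ S) :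
    IsTwoConnected (contractEdges G₁ (edgesIn G₁ (D.φ₁ ⁻¹' S))) := by
  have hS₁c := D.induce_conn_super haS hbS hSgf.1.1
  have hu₁S : D.u₁ ∈ D.φ₁ ⁻¹' S := by show D.φ₁ D.u₁ ∈ S; rw [D.hu₁]; exact haS
  refine ⟨contract_connected h₁tc.1 _, ?_⟩
  intro c
  induction c using ConnectedComponent.ind with
  | _ x₀ =>
    refine D.contract_transfer_one hSgf hS₁c x₀ D.u₁ (Or.inl rfl) ?_ ?_
    · intro w w' hadj hwS hw'S hor
      have hval : ∀ z : W, z ∈ S → D.ρ D.u₁ z ∈ D.φ₁ ⁻¹' S := by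
        intro z hz
        by_cases hz1 : z ∈ Set.range D.φ₁
        · show D.φ₁ _ ∈ S
          rw [D.ρ_spec hz1]
          exact hz
        · rw [D.ρ_out hz1]
          exact hu₁S
      exact cm_blob hS₁c (hval w hwS) (hval w' hw'S)
    · intro w hw1 hw hEq
      apply hw
      have hx₀S : x₀ ∈ D.φ₁ ⁻¹' S := by
        rcases cm_dichot hEq with h | ⟨h1, h2⟩
        · rw [← h]; exact hu₁S
        · exact h2
      have hwS : w ∈ S := hsup ((D.cover w).resolve_left hw1)
      exact cm_blob hSgf.1.1 hwS hx₀S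

lemma edgesIn_sub {S : Set W} (hsub : S ⊆ Set.range D.φ₁) (hnab : ¬ (a ∈ S ∧ b ∈ S)) :
    edgesIn G S = Sym2.map D.φ₁ '' (edgesIn G₁ (D.φ₁ ⁻¹' S)) := by
  ext e
  induction e using Sym2.ind with
  | _ x y =>
    constructor
    · intro he
      obtain ⟨hadj, hx, hy⟩ := mem_edgesIn.mp he
      obtain ⟨p, q, h', hne, hp, hq⟩ := D.adj_pull₁ hadj (hsub hx) (hsub hy)
      refine ⟨s(p, q), mem_edgesIn.mpr ⟨h', ?_, ?_⟩, by rw [Sym2.map_pair_eq, hp, hq]⟩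
      · show D.φ₁ p ∈ S
        rw [hp]
        exact hx
      · show D.φ₁ q ∈ S
        rw [hq]
        exact hy
    · rintro ⟨e', he', heq⟩
      rw [← heq]
      clear heq
      induction e' using Sym2.ind with
      | _ p q =>
        obtain ⟨h', hp, hq⟩ := mem_edgesIn.mp he'
        rw [Sym2.map_pair_eq]
        have hne : s(p, q) ≠ e₁ := by
          intro hEq
          rcases Sym2.eq_iff.mp (hEq.trans D.he₁) with ⟨h1, h2⟩ | ⟨h1, h2⟩
          · refine hnab ⟨?_, ?_⟩
            · rw [← D.hu₁, ← h1]; exact hp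
            · rw [← D.hv₁, ← h2]; exact hq
          · refine hnab ⟨?_, ?_⟩
            · rw [← D.hu₁, ← h2]; exact hq
            · rw [← D.hv₁, ← h1]; exact hp
        exact mem_edgesIn.mpr ⟨D.adj_of₁ h' hne, hp, hq⟩

lemma S_eq_image {S : Set W} (hsub : S ⊆ Set.range D.φ₁) : S = D.φ₁ '' (D.φ₁ ⁻¹' S) := by
  ext w
  constructor
  · intro hw
    obtain ⟨x, hx⟩ := hsub hw
    refine ⟨x, ?_, hx⟩
    show D.φ₁ x ∈ S
    rw [hx]
    exact hw
  · rintro ⟨x, hx, rfl⟩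
    exact hx

lemma count_sub [Fintype V₁] [Fintype W] (h₁ : Spade2 G₁) {S : Set W}
    (hSgf : IsGoodFlat G S) (hsub : S ⊆ Set.range D.φ₁) (hnab : ¬ (a ∈ S ∧ b ∈ S)) :
    (edgesIn G S).ncard = 2 * S.ncard - 3 := by
  have hgood : IsGoodFlat G₁ (D.φ₁ ⁻¹' S) :=
    ⟨D.two_conn_sub hsub hSgf.1, D.contract_two_conn_sub h₁.1 hSgf hsub hnab⟩
  have hcount := h₁.2.2 _ hgood
  have hSn : S.ncard = (D.φ₁ ⁻¹' S).ncard := by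
    conv_lhs => rw [D.S_eq_image hsub]
    rw [Set.ncard_image_of_injective _ D.inj₁]
  rw [D.edgesIn_sub hsub hnab, Set.ncard_image_of_injective _ (Sym2.map.injective D.inj₁),
    hcount, hSn]

lemma edgesIn_super {S : Set W} (hsup : Set.range D.φ₂ ⊆ S) :
    edgesIn G S = (Sym2.map D.φ₁ '' (edgesIn G₁ (D.φ₁ ⁻¹' S) \ {e₁})) ∪
      (Sym2.map D.φ₂ '' (G₂.edgeSet \ {e₂})) := by
  ext e
  induction e using Sym2.ind with
  | _ x y =>
    constructor
    · intro he
      obtain ⟨hadj, hx, hy⟩ := mem_edgesIn.mp he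
      rcases (D.adj_iff x y).mp hadj with ⟨p, q, h', hne, hp, hq⟩ | ⟨p, q, h', hne, hp, hq⟩
      · refine Or.inl ⟨s(p, q), ⟨mem_edgesIn.mpr ⟨h', ?_, ?_⟩, by simpa using hne⟩,
          by rw [Sym2.map_pair_eq, hp, hq]⟩
        · show D.φ₁ p ∈ S
          rw [hp]
          exact hx
        · show D.φ₁ q ∈ S
          rw [hq]
          exact hy
      · exact Or.inr ⟨s(p, q), ⟨h', by simpa using hne⟩, by rw [Sym2.map_pair_eq, hp, hq]⟩
    · rintro (⟨e', ⟨he', hne⟩, heq⟩ | ⟨e', ⟨he', hne⟩, heq⟩)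
      · rw [← heq]
        clear heq
        induction e' using Sym2.ind with
        | _ p q =>
          obtain ⟨h', hp, hq⟩ := mem_edgesIn.mp he'
          rw [Sym2.map_pair_eq]
          exact mem_edgesIn.mpr ⟨D.adj_of₁ h' (by simpa using hne), hp, hq⟩
      · rw [← heq]
        clear heq
        induction e' using Sym2.ind with
        | _ p q =>
          rw [Sym2.map_pair_eq]
          exact mem_edgesIn.mpr ⟨D.adj_of₂ he' (by simpa using hne), hsup ⟨p, rfl⟩, hsup ⟨q, rfl⟩⟩

lemma S_decomp_super [Fintype W] {S : Set W} (hsup : Set.range D.φ₂ ⊆ S)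
    (haS : a ∈ S) (hbS : b ∈ S) :
    S.ncard + 2 = (D.φ₁ ⁻¹' S).ncard + Nat.card V₂ := by
  have hdecomp : S = (D.φ₁ '' (D.φ₁ ⁻¹' S)) ∪ Set.range D.φ₂ := by
    ext w
    constructor
    · intro hw
      rcases D.cover w with ⟨x, hx⟩ | h2
      · refine Or.inl ⟨x, ?_, hx⟩
        show D.φ₁ x ∈ S
        rw [hx]
        exact hw
      · exact Or.inr h2
    · rintro (⟨x, hx, rfl⟩ | h2)
      · exact hx
      · exact hsup h2
  have hinter : (D.φ₁ '' (D.φ₁ ⁻¹' S)) ∩ Set.range D.φ₂ = {a, b} := by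
    ext w
    constructor
    · rintro ⟨⟨x, hx, rfl⟩, h2⟩
      rcases D.mem_ab ⟨x, rfl⟩ h2 with h | h
      · rw [h]; exact Set.mem_insert _ _
      · rw [h]; exact Set.mem_insert_of_mem _ rfl
    · intro hw
      rw [Set.mem_insert_iff, Set.mem_singleton_iff] at hw
      rcases hw with rfl | rfl
      · exact ⟨⟨D.u₁, (by show D.φ₁ D.u₁ ∈ S; rw [D.hu₁]; exact haS), D.hu₁⟩, D.aR₂⟩
      · exact ⟨⟨D.v₁, (by show D.φ₁ D.v₁ ∈ S; rw [D.hv₁]; exact hbS), D.hv₁⟩, D.bR₂⟩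
  have h := Set.ncard_union_add_ncard_inter (D.φ₁ '' (D.φ₁ ⁻¹' S)) (Set.range D.φ₂)
  rw [← hdecomp, hinter, Set.ncard_pair D.hab, Set.ncard_image_of_injective _ D.inj₁] at h
  have h2 : (Set.range D.φ₂).ncard = Nat.card V₂ := by
    rw [← Nat.card_coe_set_eq, Nat.card_range_of_injective D.inj₂]
  rw [h2] at h
  exact h

lemma count_super [Fintype V₁] [Fintype V₂] [Fintype W] (h₁ : Spade2 G₁) (h₂ : Spade2 G₂)
    {S : Set W} (hSgf : IsGoodFlat G S) (hsup : Set.range D.φ₂ ⊆ S)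
    (haS : a ∈ S) (hbS : b ∈ S) :
    (edgesIn G S).ncard = 2 * S.ncard - 3 := by
  have hgood : IsGoodFlat G₁ (D.φ₁ ⁻¹' S) :=
    ⟨D.two_conn_super haS hbS hSgf.1, D.contract_two_conn_super h₁.1 hSgf hsup haS hbS⟩
  have hcount := h₁.2.2 _ hgood
  have h3₂ := three_le_card h₂ D.e₂_mem
  have hu₁S : D.u₁ ∈ D.φ₁ ⁻¹' S := by show D.φ₁ D.u₁ ∈ S; rw [D.hu₁]; exact haS
  have hv₁S : D.v₁ ∈ D.φ₁ ⁻¹' S := by show D.φ₁ D.v₁ ∈ S; rw [D.hv₁]; exact hbS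
  have he₁S : e₁ ∈ edgesIn G₁ (D.φ₁ ⁻¹' S) := by
    have hgen : ∀ E : Set (Sym2 V₁), s(D.u₁, D.v₁) ∈ E → e₁ ∈ E := by
      intro E hE
      rw [D.he₁]
      exact hE
    exact hgen _ (mem_edgesIn.mpr ⟨D.adj₁, hu₁S, hv₁S⟩)
  have hk2 : 2 ≤ (D.φ₁ ⁻¹' S).ncard := by
    have hsub2 : ({D.u₁, D.v₁} : Set V₁) ⊆ D.φ₁ ⁻¹' S := by
      intro z hz
      rw [Set.mem_insert_iff, Set.mem_singleton_iff] at hz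
      rcases hz with rfl | rfl
      · exact hu₁S
      · exact hv₁S
    calc 2 = ({D.u₁, D.v₁} : Set V₁).ncard := (Set.ncard_pair D.une).symm
    _ ≤ _ := Set.ncard_le_ncard hsub2 (Set.toFinite _)
  have hdisj : Disjoint (Sym2.map D.φ₁ '' (edgesIn G₁ (D.φ₁ ⁻¹' S) \ {e₁}))
      (Sym2.map D.φ₂ '' (G₂.edgeSet \ {e₂})) :=
    D.edge_disj.mono_left (Set.image_mono (Set.diff_subset_diff_left (fun e he => he.1)))
  have hEcnt : (edgesIn G S).ncard =
      (edgesIn G₁ (D.φ₁ ⁻¹' S)).ncard - 1 + (G₂.edgeSet.ncard - 1) := by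
    rw [D.edgesIn_super hsup, Set.ncard_union_eq hdisj (Set.toFinite _) (Set.toFinite _),
      Set.ncard_image_of_injective _ (Sym2.map.injective D.inj₁),
      Set.ncard_image_of_injective _ (Sym2.map.injective D.inj₂),
      Set.ncard_diff_singleton_of_mem he₁S, Set.ncard_diff_singleton_of_mem D.e₂_mem]
  have hS := D.S_decomp_super hsup haS hbS
  rw [hEcnt, hcount, h₂.2.1]
  omega

end CollData

theorem stmt16' {V₁ V₂ W : Type*} [Fintype V₁] [Fintype V₂] [Fintype W]
    (G₁ : SimpleGraph V₁) (G₂ : SimpleGraph V₂) (h₁ : Spade2 G₁) (h₂ : Spade2 G₂)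
    (e₁ : Sym2 V₁) (e₂ : Sym2 V₂) (he₁ : e₁ ∈ G₁.edgeSet) (he₂ : e₂ ∈ G₂.edgeSet)
    (G : SimpleGraph W) (a b : W) (hc : IsCollision G₁ G₂ e₁ e₂ G a b) :
    Spade2 G := by
  obtain ⟨D⟩ := exists_collData hc he₁ he₂
  have h3₁ := three_le_card h₁ he₁
  have h3₂ := three_le_card h₂ he₂
  refine ⟨D.twoConnG h₁.1 h₂.1 h3₁ h3₂, D.edge_count h₁.2.1 h₂.2.1 h3₁ h3₂, ?_⟩
  intro S hSgf
  rcases D.sides hSgf with hsub | hsub | ⟨haS, hbS, hR⟩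
  · by_cases hnab : a ∈ S ∧ b ∈ S
    · by_cases hSR : S = Set.range D.φ₁
      · rw [hSR]
        exact D.count_range h₁.2.1 h3₁
      · exfalso
        obtain ⟨p, hp1, hpS⟩ : ∃ p, p ∈ Set.range D.φ₁ ∧ p ∉ S := by
          by_contra hcon
          push_neg at hcon
          exact hSR (Set.Subset.antisymm hsub hcon)
        obtain ⟨y, hy1, hy2⟩ := exists_third h3₂ D.u₂ D.v₂
        have hq2 : D.φ₂ y ∈ Set.range D.φ₂ := ⟨y, rfl⟩
        have hq1 : D.φ₂ y ∉ Set.range D.φ₁ := by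
          intro h
          rcases D.mem_ab h hq2 with h' | h'
          · exact hy1 (D.inj₂ (h'.trans D.hu₂.symm))
          · exact hy2 (D.inj₂ (h'.trans D.hv₂.symm))
        have hqS : D.φ₂ y ∉ S := fun h => hq1 (hsub h)
        exact D.nosplit hSgf hnab.1 hnab.2 hp1 hpS hq1 hqS
    · exact D.count_sub h₁ hSgf hsub hnab
  · by_cases hnab : a ∈ S ∧ b ∈ S
    · by_cases hSR : S = Set.range D.φ₂
      · rw [hSR]
        exact D.swapSides.count_range h₂.2.1 h3₂
      · exfalso
        obtain ⟨p, hp1, hpS⟩ : ∃ p, p ∈ Set.range D.φ₂ ∧ p ∉ S := by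
          by_contra hcon
          push_neg at hcon
          exact hSR (Set.Subset.antisymm hsub hcon)
        obtain ⟨y, hy1, hy2⟩ := exists_third h3₁ D.u₁ D.v₁
        have hq2 : D.φ₁ y ∈ Set.range D.φ₁ := ⟨y, rfl⟩
        have hq1 : D.φ₁ y ∉ Set.range D.φ₂ := by
          intro h
          rcases D.mem_ab hq2 h with h' | h'
          · exact hy1 (D.inj₁ (h'.trans D.hu₁.symm))
          · exact hy2 (D.inj₁ (h'.trans D.hv₁.symm))
        have hqS : D.φ₁ y ∉ S := fun h => hq1 (hsub h)
        exact D.swapSides.nosplit hSgf hnab.1 hnab.2 hp1 hpS hq1 hqS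
    · exact D.swapSides.count_sub h₂ hSgf hsub hnab
  · rcases hR with hR1 | hR2
    · by_cases hR2' : Set.range D.φ₂ ⊆ S
      · exfalso
        have huniv : S = Set.univ := Set.eq_univ_of_forall fun w => by
          rcases D.cover w with h | h
          · exact hR1 h
          · exact hR2' h
        exact good_flat_ne_univ hSgf huniv
      · exact D.swapSides.count_super h₂ h₁ hSgf hR1 haS hbS
    · by_cases hR1' : Set.range D.φ₁ ⊆ S
      · exfalso
        have huniv : S = Set.univ := Set.eq_univ_of_forall fun w => by
          rcases D.cover w with h | h
          · exact hR1' h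
          · exact hR2 h
        exact good_flat_ne_univ hSgf huniv
      · exact D.count_super h₁ h₂ hSgf hR2 haS hbS

end Coll

theorem stmt16 {V₁ V₂ W : Type*} [Fintype V₁] [DecidableEq V₁] [Fintype V₂] [DecidableEq V₂]
    [Fintype W] [DecidableEq W]
    (G₁ : SimpleGraph V₁) (G₂ : SimpleGraph V₂) (h₁ : Spade2 G₁) (h₂ : Spade2 G₂)
    (e₁ : Sym2 V₁) (e₂ : Sym2 V₂) (he₁ : e₁ ∈ G₁.edgeSet) (he₂ : e₂ ∈ G₂.edgeSet)
    (G : SimpleGraph W) (a b : W) (hc : IsCollision G₁ G₂ e₁ e₂ G a b) :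
    Spade2 G := by
  exact stmt16' G₁ G₂ h₁ h₂ e₁ e₂ he₁ he₂ G a b hc

end Gor
end

section
/- Suppose G = (V,E) is a 3-connected finite simple graph satisfying |E| = 2(|V|−1) and |E(S)| = 2|S|−3 for every good flat S ⊆ V. Then G is the complete graph K4. -/
open SimpleGraph
open scoped Pointwise

namespace Gor

section Stmt18Aux

variable {V : Type*}

/-- Auxiliary iso between a doubly-removed induced subgraph and the induce-of-induce form. -/
private def induceInduceIso (G : SimpleGraph V) (v : V) (u : {x : V | x ≠ v}) :
    G.induce {x : V | x ≠ v ∧ x ≠ ↑u} ≃g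
      (G.induce {x : V | x ≠ v}).induce {w : {x : V | x ≠ v} | w ≠ u} where
  toFun x := ⟨⟨x.1, x.2.1⟩, fun h => x.2.2 (congrArg Subtype.val h)⟩
  invFun w := ⟨w.1.1, ⟨w.1.2, fun h => w.2 (Subtype.ext h)⟩⟩
  left_inv _ := rfl
  right_inv _ := rfl
  map_rel_iff' := Iff.rfl

private lemma isolated_reachable {G : SimpleGraph V} {v x : V}
    (hiso : ∀ y, ¬ G.Adj v y) (h : G.Reachable v x) : v = x := by
  obtain ⟨w⟩ := h
  cases w with
  | nil => rfl
  | cons h p => exact absurd h (hiso _)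

private lemma incidence_eq_three [Fintype V] [DecidableEq V] (G : SimpleGraph V)
    (h3c : IsThreeConnected G)
    (hE : G.edgeSet.ncard = 2 * (Nat.card V - 1))
    (hS : ∀ S : Set V, IsGoodFlat G S → (edgesIn G S).ncard = 2 * S.ncard - 3)
    (v : V) : (G.incidenceSet v).ncard = 3 := by
  classical
  set n := Nat.card V with hnn
  have hn : 3 < n := h3c.1
  set S : Set V := {x : V | x ≠ v} with hSdef
  -- G[S] is 2-connected
  have hconnS : (G.induce S).Connected := by
    have := h3c.2 v v
    have hset : {x : V | x ≠ v ∧ x ≠ v} = S := by ext x; simp [hSdef]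
    rwa [hset] at this
  have hTC1 : IsTwoConnected (G.induce S) := by
    refine ⟨hconnS, fun u => ?_⟩
    have := h3c.2 v ↑u
    exact (induceInduceIso G v u).connected_iff.mp this
  -- v has a neighbor
  have hnbr : ∃ w, G.Adj v w := by
    by_contra hno
    push_neg at hno
    have hcard : 1 < (Finset.univ.erase v).card := by
      have h1 := Finset.card_erase_of_mem (Finset.mem_univ v)
      rw [h1, Finset.card_univ]
      have : 3 < Fintype.card V := by rwa [← Nat.card_eq_fintype_card]
      omega
    obtain ⟨a, ha, b, hb, hab⟩ := Finset.one_lt_card.mp hcard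
    have hav : a ≠ v := Finset.ne_of_mem_erase ha
    have hbv : b ≠ v := Finset.ne_of_mem_erase hb
    have hc := h3c.2 a a
    have hv' : v ∈ {x : V | x ≠ a ∧ x ≠ a} := ⟨fun h => hav h.symm, fun h => hav h.symm⟩
    have hb' : b ∈ {x : V | x ≠ a ∧ x ≠ a} := ⟨fun h => hab h.symm, fun h => hab h.symm⟩
    have hreach := hc.preconnected ⟨v, hv'⟩ ⟨b, hb'⟩
    have hiso2 : ∀ y, ¬ (G.induce {x : V | x ≠ a ∧ x ≠ a}).Adj ⟨v, hv'⟩ y :=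
      fun y h => hno y.1 h
    have hvb := isolated_reachable hiso2 hreach
    exact hbv (congrArg Subtype.val hvb).symm
  obtain ⟨w0, hw0⟩ := hnbr
  -- contraction analysis
  set F : Set (Sym2 V) := edgesIn G S with hF
  set K : SimpleGraph V := SimpleGraph.fromEdgeSet F with hK
  have hKadj : ∀ a b : V, K.Adj a b ↔ (s(a, b) ∈ F ∧ a ≠ b) := by
    intro a b; simp [hK, SimpleGraph.fromEdgeSet_adj]
  have hviso : ∀ y, ¬ K.Adj v y := by
    intro y hy
    rw [hKadj] at hy
    have := hy.1.2 v (by simp)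
    exact this rfl
  have hvcomp : ∀ x : V, K.connectedComponentMk x = K.connectedComponentMk v → x = v := by
    intro x hx
    have : K.Reachable v x := ((SimpleGraph.ConnectedComponent.eq).mp hx).symm
    exact (isolated_reachable hviso this).symm
  -- all non-v vertices in one component
  have hhom : ∀ x y : V, x ≠ v → y ≠ v →
      K.connectedComponentMk x = K.connectedComponentMk y := by
    intro x y hx hy
    have hreach : (G.induce S).Reachable ⟨x, hx⟩ ⟨y, hy⟩ :=
      hconnS.preconnected ⟨x, hx⟩ ⟨y, hy⟩
    have hmap : ∀ a b : ↥S, (G.induce S).Adj a b → K.Adj ↑a ↑b := by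
      intro a b hab
      rw [hKadj]
      refine ⟨⟨hab, ?_⟩, G.ne_of_adj hab⟩
      intro z hz
      rcases Sym2.mem_iff.mp hz with h | h
      · exact h ▸ a.2
      · exact h ▸ b.2
    have h2 := hreach.map ⟨Subtype.val, fun {a b} h => hmap a b h⟩
    exact SimpleGraph.ConnectedComponent.eq.mpr h2
  have hw0v : w0 ≠ v := (G.ne_of_adj hw0).symm
  set cv := K.connectedComponentMk v with hcv
  set c0 := K.connectedComponentMk w0 with hc0
  have hcvne : c0 ≠ cv := fun h => hw0v (hvcomp w0 h)
  have hall : ∀ c : K.ConnectedComponent, c = cv ∨ c = c0 := by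
    intro c
    obtain ⟨x, hx⟩ := c.exists_rep
    have hx' : K.connectedComponentMk x = c := hx
    by_cases hxv : x = v
    · left; rw [← hx', hxv, hcv]
    · right; rw [← hx', hc0]; exact hhom x w0 hxv hw0v
  set H := contractEdges G F with hH
  have hHadj : H.Adj cv c0 := by
    rw [hH, contractEdges]
    exact ⟨hcvne.symm, Or.inl ⟨v, w0, hw0, rfl, rfl⟩⟩
  have hTC2 : IsTwoConnected H := by
    constructor
    · haveI : Nonempty K.ConnectedComponent := ⟨cv⟩
      refine ⟨fun c d => ?_⟩
      rcases hall c with rfl | rfl <;> rcases hall d with rfl | rfl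
      · exact SimpleGraph.Reachable.refl _
      · exact hHadj.reachable
      · exact hHadj.symm.reachable
      · exact SimpleGraph.Reachable.refl _
    · intro c
      obtain ⟨e0, he0⟩ : ∃ e0 : K.ConnectedComponent, e0 ≠ c ∧
          ∀ d : K.ConnectedComponent, d ≠ c → d = e0 := by
        rcases hall c with rfl | rfl
        · exact ⟨c0, hcvne, fun d hd => (hall d).resolve_left hd⟩
        · exact ⟨cv, hcvne.symm, fun d hd => (hall d).resolve_right hd⟩
      haveI : Nonempty {d : K.ConnectedComponent | d ≠ c} := ⟨⟨e0, he0.1⟩⟩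
      refine ⟨fun a b => ?_⟩
      have ha : a.1 = e0 := he0.2 a.1 a.2
      have hb : b.1 = e0 := he0.2 b.1 b.2
      have hab : a = b := Subtype.ext (ha.trans hb.symm)
      rw [hab]
  have hgood : IsGoodFlat G S := ⟨hTC1, hTC2⟩
  have hflat := hS S hgood
  -- counting
  have hsplit : edgesIn G S = G.edgeSet \ G.incidenceSet v := by
    ext e
    simp only [edgesIn, Set.mem_setOf_eq, Set.mem_diff, SimpleGraph.incidenceSet,
      Set.mem_setOf_eq, hSdef]
    constructor
    · rintro ⟨he, hall'⟩
      exact ⟨he, fun h => (hall' v h.2) rfl⟩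
    · rintro ⟨he, hni⟩
      exact ⟨he, fun z hz hzv => hni ⟨he, hzv ▸ hz⟩⟩
  have hfin : G.edgeSet.Finite := Set.toFinite _
  have hinc_le : G.incidenceSet v ⊆ G.edgeSet := G.incidenceSet_subset v
  have hdiff : (G.edgeSet \ G.incidenceSet v).ncard
      = G.edgeSet.ncard - (G.incidenceSet v).ncard :=
    Set.ncard_diff hinc_le (hfin.subset hinc_le)
  have hSncard : S.ncard = n - 1 := by
    have h1 : S = Set.univ \ {v} := by ext x; simp [hSdef]
    rw [h1, Set.ncard_diff (Set.subset_univ _) (Set.toFinite _), Set.ncard_univ,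
      Set.ncard_singleton]
  have hdeg_le : (G.incidenceSet v).ncard ≤ G.edgeSet.ncard :=
    Set.ncard_le_ncard hinc_le hfin
  rw [hsplit, hdiff, hSncard] at hflat
  rw [hE] at hflat hdeg_le
  omega

end Stmt18Aux

theorem stmt18 {V : Type*} [Fintype V] [DecidableEq V] (G : SimpleGraph V)
    (h3c : IsThreeConnected G)
    (hE : G.edgeSet.ncard = 2 * (Nat.card V - 1))
    (hS : ∀ S : Set V, IsGoodFlat G S → (edgesIn G S).ncard = 2 * S.ncard - 3) :
    Nonempty (G ≃g (⊤ : SimpleGraph (Fin 4))) := by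
  classical
  haveI : DecidableRel G.Adj := Classical.decRel _
  have hinc : ∀ v : V, (G.incidenceSet v).ncard = 3 := incidence_eq_three G h3c hE hS
  have hdeg : ∀ v : V, G.degree v = 3 := by
    intro v
    rw [← SimpleGraph.card_incidenceSet_eq_degree, ← Set.toFinset_card,
      ← Set.ncard_eq_toFinset_card']
    exact hinc v
  have hn : Nat.card V = Fintype.card V := Nat.card_eq_fintype_card
  have hsum : ∑ v : V, G.degree v = 2 * G.edgeFinset.card :=
    G.sum_degrees_eq_twice_card_edges
  have hEcard : G.edgeSet.ncard = G.edgeFinset.card := by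
    rw [← SimpleGraph.coe_edgeFinset, Set.ncard_coe_finset]
  have h3sum : ∑ v : V, G.degree v = 3 * Fintype.card V := by
    simp [hdeg, Finset.sum_const, mul_comm]
  have hcard4 : Fintype.card V = 4 := by
    have h4 : 3 < Fintype.card V := by rw [← hn]; exact h3c.1
    rw [h3sum] at hsum
    rw [hEcard, hn] at hE
    omega
  have hadj : ∀ a b : V, a ≠ b → G.Adj a b := by
    intro a b hab
    have hsub : G.neighborFinset a ⊆ Finset.univ.erase a := by
      intro x hx
      rw [SimpleGraph.mem_neighborFinset] at hx
      rw [Finset.mem_erase]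
      exact ⟨fun h => G.loopless.irrefl a (h ▸ hx), Finset.mem_univ x⟩
    have hcards : (Finset.univ.erase a).card ≤ (G.neighborFinset a).card := by
      rw [G.card_neighborFinset_eq_degree, hdeg,
        Finset.card_erase_of_mem (Finset.mem_univ a), Finset.card_univ, hcard4]
    have heq := Finset.eq_of_subset_of_card_le hsub hcards
    have hbmem : b ∈ G.neighborFinset a := by
      rw [heq, Finset.mem_erase]
      exact ⟨hab.symm, Finset.mem_univ b⟩
    rw [SimpleGraph.mem_neighborFinset] at hbmem
    exact hbmem
  obtain ⟨e⟩ : Nonempty (V ≃ Fin 4) := by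
    rw [← hcard4]; exact ⟨Fintype.equivFin V⟩
  refine ⟨⟨e, ?_⟩⟩
  intro a b
  simp only [SimpleGraph.top_adj, ne_eq, EmbeddingLike.apply_eq_iff_eq]
  constructor
  · intro h; exact hadj a b h
  · intro h; exact G.ne_of_adj h

end Gor
end
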